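/- arXiv:2605.18965 — 12 statements merged into one kernel-verified Lean document; each statement's English description precedes it below -/
import Mathlib

section
/- Let a : ℝ → ℝ be twice continuously differentiable with a(t) > 0 for all t, let H(t) = a'(t)/a(t), and let k be a real number. Then for all real numbers T₋ ≤ T₊, ∫_{T₋}^{T₊} (−2·(H'(t) − k/a(t)²))/a(t) dt = −2·(H(T₊)/a(T₊) − H(T₋)/a(T₋)) − 2·∫_{T₋}^{T₊} H(t)²/a(t) dt + 2k·∫_{T₋}^{T₊} a(t)^{−3} dt. -/
open Filter MeasureTheory

/-- Master finite-interval curvature-dependent ANEC identity (Eq. (3.3)):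
`∫_{T₋}^{T₊} (−2(H' − k/a²))/a = −2 (H/a)|_{T₋}^{T₊} − 2∫ H²/a + 2k ∫ a⁻³`. -/
theorem curvature_finite_interval_ANEC_identity
    (a H : ℝ → ℝ) (k : ℝ) (ha : ContDiff ℝ 2 a) (hpos : ∀ t, 0 < a t)
    (hH : ∀ t, H t = deriv a t / a t) :
    ∀ Tm Tp : ℝ, Tm ≤ Tp →
      (∫ t in Tm..Tp, (-2 * (deriv H t - k / (a t) ^ 2)) / a t)
        = -2 * (H Tp / a Tp - H Tm / a Tm)
          - 2 * (∫ t in Tm..Tp, (H t) ^ 2 / a t)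
          + 2 * k * ∫ t in Tm..Tp, 1 / (a t) ^ 3 := by
  intro Tm Tp _
  have hne : ∀ t, a t ≠ 0 := fun t => (hpos t).ne'
  have ha1 : ContDiff ℝ 1 a := ha.of_le (by norm_num)
  have hda : ContDiff ℝ 1 (deriv a) := by
    have := (contDiff_succ_iff_deriv (n := 1)).mp (by exact_mod_cast ha)
    exact this.2.2
  have hHfun : H = fun t => deriv a t / a t := funext hH
  have hHC1 : ContDiff ℝ 1 H := by
    rw [hHfun]; exact hda.div ha1 hne
  have hHdiff : Differentiable ℝ H := hHC1.differentiable one_ne_zero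
  have hadiff : Differentiable ℝ a := ha1.differentiable one_ne_zero
  have hHc : Continuous H := hHC1.continuous
  have hac : Continuous a := ha1.continuous
  have hdHc : Continuous (deriv H) := hHC1.continuous_deriv le_rfl
  set g : ℝ → ℝ := fun t => H t / a t with hg
  have hgdiff : ∀ t, DifferentiableAt ℝ g t := fun t =>
    (hHdiff t).div (hadiff t) (hne t)
  have hderg : ∀ t, deriv g t = deriv H t / a t - (H t) ^ 2 / a t := by
    intro t
    have h1 : deriv g t = (deriv H t * a t - H t * deriv a t) / (a t) ^ 2 :=
      deriv_div (hHdiff t) (hadiff t) (hne t)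
    have h2 : deriv a t = H t * a t := by
      rw [hH t, div_mul_cancel₀ _ (hne t)]
    rw [h1, h2]
    field_simp [hne t]
  have hdergc : Continuous (deriv g) := by
    have : Continuous fun t => deriv H t / a t - (H t) ^ 2 / a t :=
      ((hdHc.div hac hne)).sub (((hHc.pow 2).div hac hne))
    exact this.congr fun t => (hderg t).symm
  -- FTC for g
  have hftc : (∫ t in Tm..Tp, deriv g t) = g Tp - g Tm := by
    exact intervalIntegral.integral_deriv_eq_sub (fun t _ => hgdiff t)
      (hdergc.intervalIntegrable _ _)
  -- pointwise decomposition of the integrand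
  have hpt : ∀ t, (-2 * (deriv H t - k / (a t) ^ 2)) / a t
      = -2 * deriv g t + (-2 * ((H t) ^ 2 / a t) + 2 * k * (1 / (a t) ^ 3)) := by
    intro t
    rw [hderg t]
    field_simp [hne t]
    ring
  have hint1 : IntervalIntegrable (fun t => deriv g t) volume Tm Tp :=
    hdergc.intervalIntegrable _ _
  have hint2 : IntervalIntegrable (fun t => (H t) ^ 2 / a t) volume Tm Tp :=
    ((hHc.pow 2).div hac hne).intervalIntegrable _ _
  have hint3 : IntervalIntegrable (fun t => 1 / (a t) ^ 3) volume Tm Tp :=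
    (continuous_const.div (hac.pow 3) (fun t => pow_ne_zero _ (hne t))).intervalIntegrable _ _
  calc (∫ t in Tm..Tp, (-2 * (deriv H t - k / (a t) ^ 2)) / a t)
      = ∫ t in Tm..Tp, (-2 * deriv g t
          + (-2 * ((H t) ^ 2 / a t) + 2 * k * (1 / (a t) ^ 3))) := by
        exact intervalIntegral.integral_congr fun t _ => hpt t
    _ = (∫ t in Tm..Tp, -2 * deriv g t)
          + ((∫ t in Tm..Tp, -2 * ((H t) ^ 2 / a t))
            + ∫ t in Tm..Tp, 2 * k * (1 / (a t) ^ 3)) := by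
        rw [intervalIntegral.integral_add (hint1.const_mul _)
          ((hint2.const_mul _).add (hint3.const_mul _)),
          intervalIntegral.integral_add (hint2.const_mul _) (hint3.const_mul _)]
    _ = -2 * (g Tp - g Tm) - 2 * (∫ t in Tm..Tp, (H t) ^ 2 / a t)
          + 2 * k * ∫ t in Tm..Tp, 1 / (a t) ^ 3 := by
        rw [intervalIntegral.integral_const_mul, intervalIntegral.integral_const_mul,
          intervalIntegral.integral_const_mul, hftc]
        ring
    _ = _ := by simp [hg]
end

section
/- Let a : ℝ → ℝ be twice continuously differentiable with a(t) > 0 for all t and with H(t) = a'(t)/a(t) not identically zero. Suppose H(t)/a(t) tends to finite limits as t → +∞ and as t → −∞, and suppose ∫_{0}^{T} a(t) dt → +∞ as T → +∞ and ∫_{−T}^{0} a(t) dt → +∞ as T → +∞ (null completeness in both directions). Define I(T₋,T₊) = ∫_{T₋}^{T₊} (−2H'(t))/a(t) dt. Then I(T₋,T₊) converges, as T₋ → −∞ and T₊ → +∞, to a limit l in the extended reals with l < 0; specifically, either l = −∞, or ∫_ℝ H²/a < ∞, both endpoint limits of H/a are zero, and l = −2·∫_ℝ H(t)²/a(t) dt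 < 0. -/
open Filter MeasureTheory

/-- Theorem 4.3 / Corollary 4.4 (direct form): a non-static, null-complete flat FRW
spacetime with regular affine ends has affine ANEC limit `l < 0` in the extended reals:
either `l = −∞`, or `∫ H²/a < ∞`, both endpoint limits of `H/a` vanish, and
`l = −2 ∫_ℝ H²/a < 0`. -/
theorem flat_null_complete_ANEC_negative
    (a H : ℝ → ℝ) (ha : ContDiff ℝ 2 a) (hpos : ∀ t, 0 < a t)
    (hH : ∀ t, H t = deriv a t / a t)
    (hns : ∃ t, H t ≠ 0)
    (hlimp : ∃ Lp : ℝ, Tendsto (fun t => H t / a t) atTop (nhds Lp))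
    (hlimm : ∃ Lm : ℝ, Tendsto (fun t => H t / a t) atBot (nhds Lm))
    (hfut : Tendsto (fun T => ∫ t in (0:ℝ)..T, a t) atTop atTop)
    (hpast : Tendsto (fun T => ∫ t in (-T)..(0:ℝ), a t) atTop atTop) :
    ∃ l : EReal,
      Tendsto (fun p : ℝ × ℝ =>
          ((∫ t in p.1..p.2, (-2 * deriv H t) / a t : ℝ) : EReal))
        (atBot ×ˢ atTop) (nhds l) ∧
      l < 0 ∧
      (l = ⊥ ∨
        (Integrable (fun t => (H t) ^ 2 / a t) ∧
          Tendsto (fun t => H t / a t) atTop (nhds 0) ∧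
          Tendsto (fun t => H t / a t) atBot (nhds 0) ∧
          l = ((-2 * ∫ t : ℝ, (H t) ^ 2 / a t : ℝ) : EReal) ∧
          (-2 * ∫ t : ℝ, (H t) ^ 2 / a t : ℝ) < 0)) := by
  obtain ⟨Lp, hLp⟩ := hlimp
  obtain ⟨Lm, hLm⟩ := hlimm
  have hHfun : H = fun t => deriv a t / a t := funext hH
  have hane : ∀ t, a t ≠ 0 := fun t => (hpos t).ne'
  -- regularity facts
  have ha11 : ContDiff ℝ (1 + 1) a := by
    rw [show ((1 : WithTop ℕ∞) + 1) = 2 by norm_num]; exact ha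
  have h1 : ContDiff ℝ 1 (deriv a) := (contDiff_succ_iff_deriv.mp ha11).2.2
  have hdiff_a : Differentiable ℝ a := ha.differentiable (by norm_num)
  have hdiff_a' : Differentiable ℝ (deriv a) := h1.differentiable one_ne_zero
  have hcont_a : Continuous a := ha.continuous
  have hcont_a' : Continuous (deriv a) := h1.continuous
  have hcont_a'' : Continuous (deriv (deriv a)) := (contDiff_one_iff_deriv.mp h1).2
  have hHcont : Continuous H := by
    rw [hHfun]; exact hcont_a'.div hcont_a hane
  -- derivative of H
  set H' : ℝ → ℝ := fun t =>
    (deriv (deriv a) t * a t - deriv a t * deriv a t) / (a t) ^ 2 with hH'def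
  have hHd : ∀ t, HasDerivAt H (H' t) t := by
    intro t
    rw [hHfun]
    exact ((hdiff_a' t).hasDerivAt.div (hdiff_a t).hasDerivAt (hane t))
  have hderivH : ∀ t, deriv H t = H' t := fun t => (hHd t).deriv
  have hH'cont : Continuous H' := by
    apply Continuous.div
    · exact (hcont_a''.mul hcont_a).sub (hcont_a'.mul hcont_a')
    · exact (hcont_a.pow 2)
    · exact fun t => pow_ne_zero 2 (hane t)
  -- f = H/a and its derivative F
  set f : ℝ → ℝ := fun t => H t / a t with hfdef
  set F : ℝ → ℝ := fun t => (H' t * a t - H t * deriv a t) / (a t) ^ 2 with hFdef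
  have hfD : ∀ t, HasDerivAt f (F t) t := fun t =>
    (hHd t).div (hdiff_a t).hasDerivAt (hane t)
  have hFcont : Continuous F := by
    apply Continuous.div
    · exact (hH'cont.mul hcont_a).sub (hHcont.mul hcont_a')
    · exact (hcont_a.pow 2)
    · exact fun t => pow_ne_zero 2 (hane t)
  -- g = H^2/a
  set g : ℝ → ℝ := fun t => (H t) ^ 2 / a t with hgdef
  have hgcont : Continuous g := (hHcont.pow 2).div hcont_a hane
  have hgnonneg : ∀ t, 0 ≤ g t := fun t => div_nonneg (sq_nonneg _) (hpos t).le
  -- pointwise key identity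
  have key : ∀ t, (-2 * deriv H t) / a t = (-2) * g t + (-2) * F t := by
    intro t
    rw [hderivH t]
    have hA := hane t
    simp only [hgdef, hFdef, hH'def, hH t]
    field_simp
    ring
  -- interval integrability helpers
  have hint_a : ∀ x y : ℝ, IntervalIntegrable a volume x y :=
    fun x y => hcont_a.intervalIntegrable x y
  have hint_g : ∀ x y : ℝ, IntervalIntegrable g volume x y :=
    fun x y => hgcont.intervalIntegrable x y
  have hint_F : ∀ x y : ℝ, IntervalIntegrable F volume x y :=
    fun x y => hFcont.intervalIntegrable x y
  -- the main decomposition of the ANEC integral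
  have main : ∀ p : ℝ × ℝ,
      (∫ t in p.1..p.2, (-2 * deriv H t) / a t) =
        (-2) * (∫ t in p.1..p.2, g t) + (-2) * (f p.2 - f p.1) := by
    intro p
    have hF : (∫ t in p.1..p.2, F t) = f p.2 - f p.1 :=
      intervalIntegral.integral_eq_sub_of_hasDerivAt (fun x _ => hfD x) (hint_F _ _)
    calc (∫ t in p.1..p.2, (-2 * deriv H t) / a t)
        = ∫ t in p.1..p.2, ((-2) * g t + (-2) * F t) := by simp only [key]
      _ = (∫ t in p.1..p.2, (-2) * g t) + ∫ t in p.1..p.2, (-2) * F t :=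
          intervalIntegral.integral_add ((hint_g _ _).const_mul _) ((hint_F _ _).const_mul _)
      _ = (-2) * (∫ t in p.1..p.2, g t) + (-2) * (f p.2 - f p.1) := by
          rw [intervalIntegral.integral_const_mul, intervalIntegral.integral_const_mul, hF]
  -- the boundary term converges
  have hbd : Tendsto (fun p : ℝ × ℝ => (-2) * (f p.2 - f p.1)) (atBot ×ˢ atTop)
      (nhds ((-2) * (Lp - Lm))) :=
    (((hLp.comp tendsto_snd).sub (hLm.comp tendsto_fst)).const_mul _)
  by_cases hg_int : Integrable g
  · -- CASE: H²/a integrable; limit is -2∫g, endpoints vanish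
    set J : ℝ := ∫ t : ℝ, g t with hJdef
    -- J > 0
    obtain ⟨t0, ht0⟩ := hns
    have hg0 : 0 < g t0 := div_pos (pow_two_pos_of_ne_zero ht0) (hpos t0)
    have hJpos : 0 < J := by
      rw [hJdef, integral_pos_iff_support_of_nonneg hgnonneg hg_int]
      have hU : IsOpen {x | 0 < g x} := isOpen_lt continuous_const hgcont
      have hsub : {x | 0 < g x} ⊆ Function.support g := fun x hx => ne_of_gt hx
      exact lt_of_lt_of_le (hU.measure_pos volume ⟨t0, hg0⟩) (measure_mono hsub)
    -- bound on interval integrals of g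
    have hbound : ∀ x y : ℝ, (∫ t in x..y, g t) ≤ J := by
      intro x y
      rcases le_total x y with hxy | hxy
      · rw [intervalIntegral.integral_of_le hxy]
        exact setIntegral_le_integral hg_int (Eventually.of_forall hgnonneg)
      · rw [intervalIntegral.integral_of_ge hxy]
        simp only [neg_nonpos, hJdef]
        refine le_trans (neg_nonpos_of_nonneg ?_) hJpos.le
        exact setIntegral_nonneg measurableSet_Ioc fun t _ => hgnonneg t
    -- endpoint limits vanish
    have hLp0 : Lp = 0 := by
      by_contra hne
      have hc : (0:ℝ) < Lp ^ 2 / 2 := by positivity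
      set c : ℝ := Lp ^ 2 / 2 with hcdef
      have hev : ∀ᶠ t in atTop, c ≤ (f t) ^ 2 :=
        Filter.Tendsto.eventually_const_le (by nlinarith [sq_nonneg Lp]) (hLp.pow 2)
      obtain ⟨T, hT⟩ := eventually_atTop.mp hev
      have hpt : ∀ t, T ≤ t → c * a t ≤ g t := by
        intro t ht
        have h1 : (f t) ^ 2 * a t = g t := by
          have hA := hane t
          simp only [hfdef, hgdef]
          field_simp
        calc c * a t ≤ (f t) ^ 2 * a t :=
              mul_le_mul_of_nonneg_right (hT t ht) (hpos t).le
          _ = g t := h1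
      have hTS : ∀ S, T ≤ S → c * (∫ t in T..S, a t) ≤ J := by
        intro S hS
        calc c * (∫ t in T..S, a t) = ∫ t in T..S, c * a t :=
              (intervalIntegral.integral_const_mul _ _).symm
          _ ≤ ∫ t in T..S, g t := by
              apply intervalIntegral.integral_mono_on hS ((hint_a _ _).const_mul _) (hint_g _ _)
              exact fun t ht => hpt t ht.1
          _ ≤ J := hbound _ _
      -- but ∫_T^S a → ∞
      have hev2 : ∀ᶠ S in atTop, (∫ t in (0:ℝ)..T, a t) + (J / c + 1) ≤ ∫ t in (0:ℝ)..S, a t :=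
        hfut.eventually (eventually_ge_atTop _)
      obtain ⟨S, hS1, hS2⟩ := (hev2.and (eventually_ge_atTop T)).exists
      have hadd : (∫ t in (0:ℝ)..T, a t) + (∫ t in T..S, a t) = ∫ t in (0:ℝ)..S, a t :=
        intervalIntegral.integral_add_adjacent_intervals (hint_a _ _) (hint_a _ _)
      have hD : J / c + 1 ≤ ∫ t in T..S, a t := by linarith
      have h3 := mul_le_mul_of_nonneg_left hD hc.le
      rw [mul_add, mul_one, mul_div_cancel₀ _ hc.ne'] at h3
      have h4 := hTS S hS2
      linarith
    have hLm0 : Lm = 0 := by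
      by_contra hne
      have hc : (0:ℝ) < Lm ^ 2 / 2 := by positivity
      set c : ℝ := Lm ^ 2 / 2 with hcdef
      have hev : ∀ᶠ t in atBot, c ≤ (f t) ^ 2 :=
        Filter.Tendsto.eventually_const_le (by nlinarith [sq_nonneg Lm]) (hLm.pow 2)
      obtain ⟨T, hT⟩ := eventually_atBot.mp hev
      have hpt : ∀ t, t ≤ T → c * a t ≤ g t := by
        intro t ht
        have h1 : (f t) ^ 2 * a t = g t := by
          have hA := hane t
          simp only [hfdef, hgdef]
          field_simp
        calc c * a t ≤ (f t) ^ 2 * a t :=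
              mul_le_mul_of_nonneg_right (hT t ht) (hpos t).le
          _ = g t := h1
      have hTS : ∀ S, S ≤ T → c * (∫ t in S..T, a t) ≤ J := by
        intro S hS
        calc c * (∫ t in S..T, a t) = ∫ t in S..T, c * a t :=
              (intervalIntegral.integral_const_mul _ _).symm
          _ ≤ ∫ t in S..T, g t := by
              apply intervalIntegral.integral_mono_on hS ((hint_a _ _).const_mul _) (hint_g _ _)
              exact fun t ht => hpt t ht.2
          _ ≤ J := hbound _ _
      have hev2 : ∀ᶠ T' in atTop,
          (∫ t in T..(0:ℝ), a t) + (J / c + 1) ≤ ∫ t in (-T')..(0:ℝ), a t :=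
        hpast.eventually (eventually_ge_atTop _)
      obtain ⟨T', hT'1, hT'2⟩ := (hev2.and (eventually_ge_atTop (-T))).exists
      have hST : -T' ≤ T := by linarith
      have hadd : (∫ t in (-T')..T, a t) + (∫ t in T..(0:ℝ), a t) = ∫ t in (-T')..(0:ℝ), a t :=
        intervalIntegral.integral_add_adjacent_intervals (hint_a _ _) (hint_a _ _)
      have hD : J / c + 1 ≤ ∫ t in (-T')..T, a t := by linarith
      have h3 := mul_le_mul_of_nonneg_left hD hc.le
      rw [mul_add, mul_one, mul_div_cancel₀ _ hc.ne'] at h3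
      have h4 := hTS (-T') hST
      linarith
    -- convergence of the interval integrals of g
    have hGJ : Tendsto (fun p : ℝ × ℝ => ∫ t in p.1..p.2, g t) (atBot ×ˢ atTop) (nhds J) :=
      intervalIntegral_tendsto_integral hg_int tendsto_fst tendsto_snd
    have hbd0 : Tendsto (fun p : ℝ × ℝ => (-2) * (f p.2 - f p.1)) (atBot ×ˢ atTop)
        (nhds 0) := by
      have : (-2 : ℝ) * (Lp - Lm) = 0 := by rw [hLp0, hLm0]; ring
      rwa [this] at hbd
    have hI : Tendsto (fun p : ℝ × ℝ => ∫ t in p.1..p.2, (-2 * deriv H t) / a t)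
        (atBot ×ˢ atTop) (nhds ((-2) * J)) := by
      have := (hGJ.const_mul (-2)).add hbd0
      rw [add_zero] at this
      exact this.congr fun p => (main p).symm
    refine ⟨(((-2) * J : ℝ) : EReal), EReal.tendsto_coe.mpr hI, ?_, Or.inr ?_⟩
    · exact_mod_cast (by linarith : (-2) * J < (0:ℝ))
    · refine ⟨hg_int, hLp0 ▸ hLp, hLm0 ▸ hLm, rfl, by linarith⟩
  · -- CASE: H²/a not integrable; limit is ⊥
    have hunb : ∀ M : ℝ, ∃ n : ℕ, M ≤ ∫ t in (-(n:ℝ))..(n:ℝ), g t := by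
      by_contra hcon
      push_neg at hcon
      obtain ⟨M, hM⟩ := hcon
      apply hg_int
      apply integrable_of_intervalIntegral_norm_bounded M
        (fun n : ℕ => (hgcont.integrableOn_Icc).mono_set Set.Ioc_subset_Icc_self)
        (tendsto_neg_atBot_iff.mpr tendsto_natCast_atTop_atTop)
        tendsto_natCast_atTop_atTop
      refine Eventually.of_forall fun n => ?_
      have : (∫ t in (-(n:ℝ))..(n:ℝ), ‖g t‖) = ∫ t in (-(n:ℝ))..(n:ℝ), g t := by
        apply intervalIntegral.integral_congr
        intro t _
        exact Real.norm_of_nonneg (hgnonneg t)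
      rw [this]
      exact (hM n).le
    have hGtop : Tendsto (fun p : ℝ × ℝ => ∫ t in p.1..p.2, g t) (atBot ×ˢ atTop) atTop := by
      rw [tendsto_atTop]
      intro M
      obtain ⟨n, hn⟩ := hunb M
      have h1 : ∀ᶠ p : ℝ × ℝ in atBot ×ˢ atTop, p.1 ≤ -(n:ℝ) :=
        tendsto_fst.eventually (eventually_le_atBot _)
      have h2 : ∀ᶠ p : ℝ × ℝ in atBot ×ˢ atTop, (n:ℝ) ≤ p.2 :=
        tendsto_snd.eventually (eventually_ge_atTop _)
      filter_upwards [h1, h2] with p hp1 hp2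
      refine le_trans hn ?_
      apply intervalIntegral.integral_mono_interval hp1 (by linarith) hp2
        (Eventually.of_forall hgnonneg) (hint_g _ _)
    have hI : Tendsto (fun p : ℝ × ℝ => ∫ t in p.1..p.2, (-2 * deriv H t) / a t)
        (atBot ×ˢ atTop) atBot := by
      have h1 : Tendsto (fun p : ℝ × ℝ => (-2) * ∫ t in p.1..p.2, g t)
          (atBot ×ˢ atTop) atBot :=
        (tendsto_const_mul_atBot_of_neg (by norm_num : (-2:ℝ) < 0)).mpr hGtop
      exact (h1.atBot_add hbd).congr fun p => (main p).symm
    refine ⟨⊥, ?_, by simp, Or.inl rfl⟩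
    rw [EReal.tendsto_nhds_bot_iff_real]
    intro x
    filter_upwards [hI.eventually (eventually_lt_atBot x)] with p hp
    exact_mod_cast hp
end

section
/- Let a : ℝ → ℝ be twice continuously differentiable with a(t) > 0 for all t and H(t) = a'(t)/a(t) not identically zero. Suppose H(t)/a(t) tends to finite limits as t → ±∞, and suppose the finite-interval integrals I(T₋,T₊) = ∫_{T₋}^{T₊} (−2H'(t))/a(t) dt converge, as T₋ → −∞ and T₊ → +∞, to a limit l in the extended reals with l ≥ 0 (allowing l = +∞). Then at least one of ∫_{0}^{T} a(t) dt or ∫_{−T}^{0} a(t) dt remains bounded as T → +∞; that is, the spacetime is null-incomplete in at least one time direction. -/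
open Filter MeasureTheory

/-- Theorem 4.3: if a non-static flat FRW spacetime with regular affine ends has affine
ANEC limit `l ≥ 0` (allowing `l = +∞`), then it is null-incomplete in at least one time
direction, i.e. one of the affine lengths `∫_0^T a` or `∫_{−T}^0 a` stays bounded. -/
theorem flat_ANEC_forces_null_incompleteness
    (a H : ℝ → ℝ) (ha : ContDiff ℝ 2 a) (hpos : ∀ t, 0 < a t)
    (hH : ∀ t, H t = deriv a t / a t)
    (hns : ∃ t, H t ≠ 0)
    (hlimp : ∃ Lp : ℝ, Tendsto (fun t => H t / a t) atTop (nhds Lp))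
    (hlimm : ∃ Lm : ℝ, Tendsto (fun t => H t / a t) atBot (nhds Lm))
    (l : EReal)
    (hconv : Tendsto (fun p : ℝ × ℝ =>
          ((∫ t in p.1..p.2, (-2 * deriv H t) / a t : ℝ) : EReal))
        (atBot ×ˢ atTop) (nhds l))
    (hl : 0 ≤ l) :
    (∃ M : ℝ, ∀ T : ℝ, (∫ t in (0:ℝ)..T, a t) ≤ M) ∨
    (∃ M : ℝ, ∀ T : ℝ, (∫ t in (-T)..(0:ℝ), a t) ≤ M) := by
  by_contra hcon
  push_neg at hcon
  obtain ⟨hu1, hu2⟩ := hcon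
  obtain ⟨Lp, hgp⟩ := hlimp
  obtain ⟨Lm, hgm⟩ := hlimm
  haveI : (atBot ×ˢ atTop : Filter (ℝ × ℝ)).NeBot :=
    Filter.prod_neBot.mpr ⟨inferInstance, inferInstance⟩
  -- basic regularity facts
  have hane : ∀ t, a t ≠ 0 := fun t => (hpos t).ne'
  have h2 : ContDiff ℝ ((1:WithTop ℕ∞)+1) a := by
    have : ((1:WithTop ℕ∞)+1) = 2 := by norm_num
    rw [this]; exact ha
  have hd := (contDiff_succ_iff_deriv.mp h2)
  have haD : Differentiable ℝ a := hd.1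
  have ha1 : ContDiff ℝ 1 (deriv a) := hd.2.2
  have hHC1 : ContDiff ℝ 1 H := by
    have h := ha1.div (ha.of_le (by norm_num)) hane
    have he : H = fun t => deriv a t / a t := funext hH
    rw [he]; exact h
  have hHdiff : Differentiable ℝ H := hHC1.differentiable one_ne_zero
  have hH'cont : Continuous (deriv H) := by
    have h1 : ContDiff ℝ ((0:WithTop ℕ∞)+1) H := by norm_num; exact hHC1
    exact (contDiff_succ_iff_deriv.mp h1).2.2.continuous
  have hacont : Continuous a := ha.continuous
  set g : ℝ → ℝ := fun t => H t / a t with hg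
  have gcont : Continuous g := hHC1.continuous.div hacont hane
  have hda : ∀ t, deriv a t = H t * a t := by
    intro t; rw [hH t, div_mul_cancel₀ _ (hane t)]
  have c1 : Continuous (fun t => (-2 * deriv H t) / a t) :=
    (continuous_const.mul hH'cont).div hacont hane
  have c2 : Continuous (fun t => g t ^ 2 * a t) := ((gcont.pow 2).mul hacont)
  -- the key integration-by-parts identity
  have hFd : ∀ t : ℝ, HasDerivAt (fun s => -2 * g s)
      ((-2 * deriv H t) / a t + 2 * (g t ^ 2 * a t)) t := by
    intro t
    have h1 : HasDerivAt (fun s => H s / a s)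
        ((deriv H t * a t - H t * deriv a t) / (a t) ^ 2) t :=
      ((hHdiff t).hasDerivAt).div ((haD t).hasDerivAt) (hane t)
    have h2 := h1.const_mul (-2 : ℝ)
    refine h2.congr_deriv ?_
    rw [hda t, hg]
    field_simp [hane t]
    ring
  have key : ∀ x y : ℝ, (∫ t in x..y, (-2 * deriv H t) / a t)
      = (2 * g x - 2 * g y) - 2 * ∫ t in x..y, g t ^ 2 * a t := by
    intro x y
    have hsum : (∫ t in x..y, ((-2 * deriv H t) / a t + 2 * (g t ^ 2 * a t)))
        = (-2 * g y) - (-2 * g x) :=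
      intervalIntegral.integral_eq_sub_of_hasDerivAt (fun t _ => hFd t)
        ((c1.add (continuous_const.mul c2)).intervalIntegrable x y)
    have hadd : (∫ t in x..y, ((-2 * deriv H t) / a t + 2 * (g t ^ 2 * a t)))
        = (∫ t in x..y, (-2 * deriv H t) / a t) + ∫ t in x..y, 2 * (g t ^ 2 * a t) :=
      intervalIntegral.integral_add (c1.intervalIntegrable x y)
        ((continuous_const.mul c2).intervalIntegrable x y)
    have hc : (∫ t in x..y, 2 * (g t ^ 2 * a t)) = 2 * ∫ t in x..y, g t ^ 2 * a t :=
      intervalIntegral.integral_const_mul 2 _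
    rw [hadd, hc] at hsum
    linarith
  -- the primitive of the nonnegative integrand g² a
  set w : ℝ → ℝ := fun y => ∫ t in (0:ℝ)..y, g t ^ 2 * a t with hw
  have wsub : ∀ x y : ℝ, w y - w x = ∫ t in x..y, g t ^ 2 * a t := by
    intro x y
    have h : (∫ t in (0:ℝ)..x, g t ^ 2 * a t) + (∫ t in x..y, g t ^ 2 * a t)
        = ∫ t in (0:ℝ)..y, g t ^ 2 * a t :=
      intervalIntegral.integral_add_adjacent_intervals
        (c2.intervalIntegrable 0 x) (c2.intervalIntegrable x y)
    simp only [hw]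
    linarith
  have wmono : Monotone w := by
    intro x y hxy
    have h0 : 0 ≤ ∫ t in x..y, g t ^ 2 * a t :=
      intervalIntegral.integral_nonneg hxy (fun t _ => mul_nonneg (sq_nonneg _) (hpos t).le)
    have := wsub x y; linarith
  -- the boundary term converges
  have hbnd : Tendsto (fun p : ℝ × ℝ => 2 * g p.1 - 2 * g p.2) (atBot ×ˢ atTop)
      (nhds (2 * Lm - 2 * Lp)) :=
    ((hgm.comp tendsto_fst).const_mul 2).sub ((hgp.comp tendsto_snd).const_mul 2)
  -- rewriting the ANEC integral
  have heq : (fun p : ℝ × ℝ => (∫ t in p.1..p.2, (-2 * deriv H t) / a t))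
      = fun p : ℝ × ℝ => (2 * g p.1 - 2 * g p.2) - 2 * (w p.2 - w p.1) := by
    funext p; rw [key p.1 p.2, wsub p.1 p.2]
  -- the completeness assumptions, rephrased
  have hA : Tendsto (fun T => ∫ t in (0:ℝ)..T, a t) atTop atTop := by
    apply tendsto_atTop_atTop_of_monotone'
    · intro x y hxy
      have h : (∫ t in (0:ℝ)..x, a t) + (∫ t in x..y, a t) = ∫ t in (0:ℝ)..y, a t :=
        intervalIntegral.integral_add_adjacent_intervals
          (hacont.intervalIntegrable 0 x) (hacont.intervalIntegrable x y)
      have h0 : 0 ≤ ∫ t in x..y, a t :=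
        intervalIntegral.integral_nonneg hxy (fun t _ => (hpos t).le)
      linarith
    · rintro ⟨M, hM⟩
      obtain ⟨T, hT⟩ := hu1 M
      exact absurd (hM (Set.mem_range_self T)) (not_le.mpr hT)
  have hB : Tendsto (fun x => ∫ t in x..(0:ℝ), a t) atBot atTop := by
    have hB0 : Tendsto (fun T => ∫ t in (-T)..(0:ℝ), a t) atTop atTop := by
      apply tendsto_atTop_atTop_of_monotone'
      · intro x y hxy
        have h : (∫ t in (-y)..(-x), a t) + (∫ t in (-x)..(0:ℝ), a t)
            = ∫ t in (-y)..(0:ℝ), a t :=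
          intervalIntegral.integral_add_adjacent_intervals
            (hacont.intervalIntegrable (-y) (-x)) (hacont.intervalIntegrable (-x) 0)
        have h0 : 0 ≤ ∫ t in (-y)..(-x), a t :=
          intervalIntegral.integral_nonneg (by linarith) (fun t _ => (hpos t).le)
        linarith
      · rintro ⟨M, hM⟩
        obtain ⟨T, hT⟩ := hu2 M
        exact absurd (hM (Set.mem_range_self T)) (not_le.mpr hT)
    have h := hB0.comp (tendsto_neg_atBot_atTop (G := ℝ))
    have he : ((fun T => ∫ t in (-T)..(0:ℝ), a t) ∘ Neg.neg) = fun x => ∫ t in x..(0:ℝ), a t := by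
      funext x; simp [Function.comp]
    rwa [he] at h
  -- Case A: if the total integral of g² a is infinite, then l = ⊥, contradiction
  have caseA : Tendsto (fun p : ℝ × ℝ => w p.2 - w p.1) (atBot ×ˢ atTop) atTop → False := by
    intro hJ
    have hI : Tendsto (fun p : ℝ × ℝ => (∫ t in p.1..p.2, (-2 * deriv H t) / a t))
        (atBot ×ˢ atTop) atBot := by
      rw [heq]
      rw [← tendsto_neg_atTop_iff]
      have hev : ∀ᶠ p in (atBot ×ˢ atTop : Filter (ℝ × ℝ)),
          2 * (w p.2 - w p.1) - (2 * Lm - 2 * Lp + 1)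
            ≤ -((2 * g p.1 - 2 * g p.2) - 2 * (w p.2 - w p.1)) := by
        filter_upwards [hbnd.eventually (eventually_le_nhds (lt_add_one _))] with p hp
        linarith
      refine tendsto_atTop_mono' _ hev ?_
      exact tendsto_atTop_add_const_right _ _ (hJ.const_mul_atTop two_pos)
    have hbot : Tendsto (fun p : ℝ × ℝ =>
        ((∫ t in p.1..p.2, (-2 * deriv H t) / a t : ℝ) : EReal))
        (atBot ×ˢ atTop) (nhds ⊥) := by
      rw [EReal.tendsto_nhds_bot_iff_real]
      intro x
      filter_upwards [hI.eventually (eventually_lt_atBot x)] with p hp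
      exact_mod_cast EReal.coe_lt_coe_iff.mpr hp
    have hlb : l = ⊥ := tendsto_nhds_unique hconv hbot
    rw [hlb] at hl
    exact absurd hl (by simp [← EReal.coe_zero])
  by_cases hba : BddAbove (Set.range w)
  swap
  · apply caseA
    have htop : Tendsto w atTop atTop := tendsto_atTop_atTop_of_monotone' wmono hba
    have hev : ∀ᶠ p in (atBot ×ˢ atTop : Filter (ℝ × ℝ)),
        w p.2 + (-(w 0)) ≤ w p.2 - w p.1 := by
      filter_upwards [(eventually_le_atBot (0:ℝ)).prod_inl atTop] with p hp
      have := wmono hp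
      linarith
    exact tendsto_atTop_mono' _ hev
      (tendsto_atTop_add_const_right _ _ (htop.comp tendsto_snd))
  by_cases hbb : BddBelow (Set.range w)
  swap
  · apply caseA
    have hbot : Tendsto w atBot atBot := tendsto_atBot_atBot_of_monotone' wmono hbb
    have hev : ∀ᶠ p in (atBot ×ˢ atTop : Filter (ℝ × ℝ)),
        -(w p.1) + w 0 ≤ w p.2 - w p.1 := by
      filter_upwards [(eventually_ge_atTop (0:ℝ)).prod_inr atBot] with p hp
      have := wmono hp
      linarith
    exact tendsto_atTop_mono' _ hev
      (tendsto_atTop_add_const_right _ _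
        ((tendsto_neg_atBot_atTop (G := ℝ)).comp (hbot.comp tendsto_fst)))
  -- Case B: the total integral of g² a is finite
  set Su : ℝ := ⨆ y, w y with hSu
  set Sd : ℝ := ⨅ y, w y with hSd
  have hwt : Tendsto w atTop (nhds Su) := tendsto_atTop_ciSup wmono hba
  have hwb : Tendsto w atBot (nhds Sd) := tendsto_atBot_ciInf wmono hbb
  -- Lp = 0
  have hLp : Lp = 0 := by
    by_contra hne
    have hp2 : (0:ℝ) < Lp ^ 2 := by positivity
    have hsq : Tendsto (fun t => g t ^ 2) atTop (nhds (Lp ^ 2)) := hgp.pow 2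
    have hev : ∀ᶠ t in atTop, Lp ^ 2 / 2 < g t ^ 2 :=
      hsq.eventually_const_lt (by linarith)
    obtain ⟨t₀, ht₀⟩ := eventually_atTop.mp hev
    have hbound : ∀ y, t₀ ≤ y → (Lp ^ 2 / 2) * (∫ t in t₀..y, a t) ≤ Su - w t₀ := by
      intro y hy
      have hmi : (∫ t in t₀..y, (Lp ^ 2 / 2) * a t) ≤ ∫ t in t₀..y, g t ^ 2 * a t :=
        intervalIntegral.integral_mono_on hy
          ((continuous_const.mul hacont).intervalIntegrable _ _)
          (c2.intervalIntegrable _ _)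
          (fun t ht => mul_le_mul_of_nonneg_right (ht₀ t ht.1).le (hpos t).le)
      rw [intervalIntegral.integral_const_mul] at hmi
      have h1 := wsub t₀ y
      have h2 : w y ≤ Su := le_ciSup hba y
      linarith
    have hint : Tendsto (fun y => ∫ t in t₀..y, a t) atTop atTop := by
      have heq2 : (fun y => ∫ t in t₀..y, a t)
          = fun y => (∫ t in (0:ℝ)..y, a t) + (-(∫ t in (0:ℝ)..t₀, a t)) := by
        funext y
        have h : (∫ t in (0:ℝ)..t₀, a t) + (∫ t in t₀..y, a t) = ∫ t in (0:ℝ)..y, a t :=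
          intervalIntegral.integral_add_adjacent_intervals
            (hacont.intervalIntegrable 0 t₀) (hacont.intervalIntegrable t₀ y)
        linarith
      rw [heq2]
      exact tendsto_atTop_add_const_right _ _ hA
    obtain ⟨y, hy1, hy2⟩ :=
      ((hint.eventually (eventually_gt_atTop ((Su - w t₀) / (Lp ^ 2 / 2)))).and
        (eventually_ge_atTop t₀)).exists
    have := hbound y hy2
    have h3 : (Su - w t₀) < (Lp ^ 2 / 2) * (∫ t in t₀..y, a t) := by
      rw [div_lt_iff₀ (by linarith)] at hy1
      linarith [hy1]
    linarith
  -- Lm = 0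
  have hLm : Lm = 0 := by
    by_contra hne
    have hp2 : (0:ℝ) < Lm ^ 2 := by positivity
    have hsq : Tendsto (fun t => g t ^ 2) atBot (nhds (Lm ^ 2)) := hgm.pow 2
    have hev : ∀ᶠ t in atBot, Lm ^ 2 / 2 < g t ^ 2 :=
      hsq.eventually_const_lt (by linarith)
    obtain ⟨t₁, ht₁⟩ := eventually_atBot.mp hev
    have hbound : ∀ x, x ≤ t₁ → (Lm ^ 2 / 2) * (∫ t in x..t₁, a t) ≤ w t₁ - Sd := by
      intro x hx
      have hmi : (∫ t in x..t₁, (Lm ^ 2 / 2) * a t) ≤ ∫ t in x..t₁, g t ^ 2 * a t :=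
        intervalIntegral.integral_mono_on hx
          ((continuous_const.mul hacont).intervalIntegrable _ _)
          (c2.intervalIntegrable _ _)
          (fun t ht => mul_le_mul_of_nonneg_right (ht₁ t ht.2).le (hpos t).le)
      rw [intervalIntegral.integral_const_mul] at hmi
      have h1 := wsub x t₁
      have h2 : Sd ≤ w x := ciInf_le hbb x
      linarith
    have hint : Tendsto (fun x => ∫ t in x..t₁, a t) atBot atTop := by
      have heq2 : (fun x => ∫ t in x..t₁, a t)
          = fun x => (∫ t in x..(0:ℝ), a t) + (∫ t in (0:ℝ)..t₁, a t) := by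
        funext x
        have h : (∫ t in x..(0:ℝ), a t) + (∫ t in (0:ℝ)..t₁, a t) = ∫ t in x..t₁, a t :=
          intervalIntegral.integral_add_adjacent_intervals
            (hacont.intervalIntegrable x 0) (hacont.intervalIntegrable 0 t₁)
        linarith
      rw [heq2]
      exact tendsto_atTop_add_const_right _ _ hB
    obtain ⟨x, hx1, hx2⟩ :=
      ((hint.eventually (eventually_gt_atTop ((w t₁ - Sd) / (Lm ^ 2 / 2)))).and
        (eventually_le_atBot t₁)).exists
    have := hbound x hx2
    have h3 : (w t₁ - Sd) < (Lm ^ 2 / 2) * (∫ t in x..t₁, a t) := by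
      rw [div_lt_iff₀ (by linarith)] at hx1
      linarith [hx1]
    linarith
  -- compute the limit l
  have hJ : Tendsto (fun p : ℝ × ℝ => w p.2 - w p.1) (atBot ×ˢ atTop)
      (nhds (Su - Sd)) := (hwt.comp tendsto_snd).sub (hwb.comp tendsto_fst)
  have hIlim : Tendsto (fun p : ℝ × ℝ => (∫ t in p.1..p.2, (-2 * deriv H t) / a t))
      (atBot ×ˢ atTop) (nhds ((2 * Lm - 2 * Lp) - 2 * (Su - Sd))) := by
    rw [heq]
    exact hbnd.sub (hJ.const_mul 2)
  have hcoe : Tendsto (fun p : ℝ × ℝ =>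
      ((∫ t in p.1..p.2, (-2 * deriv H t) / a t : ℝ) : EReal)) (atBot ×ˢ atTop)
      (nhds ((((2 * Lm - 2 * Lp) - 2 * (Su - Sd) : ℝ)) : EReal)) :=
    EReal.tendsto_coe.mpr hIlim
  have hleq : l = (((2 * Lm - 2 * Lp) - 2 * (Su - Sd) : ℝ) : EReal) :=
    tendsto_nhds_unique hconv hcoe
  have hr : (0:ℝ) ≤ (2 * Lm - 2 * Lp) - 2 * (Su - Sd) := by
    rw [hleq] at hl
    exact_mod_cast hl
  rw [hLp, hLm] at hr
  have hw0u : w 0 ≤ Su := le_ciSup hba 0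
  have hw0d : Sd ≤ w 0 := ciInf_le hbb 0
  have hSeq : Su = Sd := le_antisymm (by linarith) (by linarith)
  have hwconst : ∀ t, w t = Su :=
    fun t => le_antisymm (le_ciSup hba t) (hSeq ▸ ciInf_le hbb t)
  obtain ⟨t, ht⟩ := hns
  have hder : HasDerivAt w (g t ^ 2 * a t) t :=
    (c2.integral_hasStrictDerivAt 0 t).hasDerivAt
  have hzero : g t ^ 2 * a t = 0 := by
    have hcw : w = fun _ => Su := funext hwconst
    have h0 : HasDerivAt w 0 t := by rw [hcw]; exact hasDerivAt_const t Su
    exact hder.unique h0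
  have hgt : g t = 0 := by
    rcases mul_eq_zero.mp hzero with h | h
    · exact pow_eq_zero_iff two_ne_zero |>.mp h
    · exact absurd h (hane t)
  have : H t / a t = 0 := hgt
  rcases div_eq_zero_iff.mp this with h | h
  · exact ht h
  · exact hane t h
end

section
/- Let a : ℝ → ℝ be twice continuously differentiable with a(t) > 0 for all t and H(t) = a'(t)/a(t). Suppose H(t)/a(t) tends to finite limits as t → ±∞, that ∫_{0}^{T} a(t) dt → +∞ and ∫_{−T}^{0} a(t) dt → +∞ as T → +∞ (null completeness in both directions), and that the finite-interval integrals I(T₋,T₊) = ∫_{T₋}^{T₊} (−2H'(t))/a(t) dt converge to 0 as T₋ → −∞ and T₊ → +∞. Then H(t) = 0 for all t, and a is a constant function. -/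
open Filter MeasureTheory

/-- Corollary 4.6 (rigidity of the saturated flat case): a null-complete flat FRW
spacetime with regular affine ends and vanishing affine ANEC is static:
`H ≡ 0` and `a` is constant. -/
theorem flat_ANEC_saturation_rigidity
    (a H : ℝ → ℝ) (ha : ContDiff ℝ 2 a) (hpos : ∀ t, 0 < a t)
    (hH : ∀ t, H t = deriv a t / a t)
    (hlimp : ∃ Lp : ℝ, Tendsto (fun t => H t / a t) atTop (nhds Lp))
    (hlimm : ∃ Lm : ℝ, Tendsto (fun t => H t / a t) atBot (nhds Lm))
    (hfut : Tendsto (fun T => ∫ t in (0:ℝ)..T, a t) atTop atTop)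
    (hpast : Tendsto (fun T => ∫ t in (-T)..(0:ℝ), a t) atTop atTop)
    (hzero : Tendsto (fun p : ℝ × ℝ => ∫ t in p.1..p.2, (-2 * deriv H t) / a t)
        (atBot ×ˢ atTop) (nhds 0)) :
    (∀ t, H t = 0) ∧ (∃ C : ℝ, ∀ t, a t = C) := by
  obtain ⟨Lp, hLp⟩ := hlimp
  obtain ⟨Lm, hLm⟩ := hlimm
  have hane : ∀ t, a t ≠ 0 := fun t => (hpos t).ne'
  have ha2 : ContDiff ℝ ((1:ℕ∞) + 1) a := by norm_num at ha ⊢; exact ha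
  have haD : Differentiable ℝ a := (contDiff_succ_iff_deriv.mp ha2).1
  have haC : Continuous a := haD.continuous
  have hdaC1 : ContDiff ℝ 1 (deriv a) := (contDiff_succ_iff_deriv.mp ha2).2.2
  have hHC1 : ContDiff ℝ 1 H := by
    have hfe : H = fun t => deriv a t / a t := funext hH
    rw [hfe]
    exact hdaC1.div (ha.of_le (by norm_num)) hane
  have hHD : Differentiable ℝ H := hHC1.differentiable one_ne_zero
  have hJC : Continuous H := hHC1.continuous
  have hdHC : Continuous (deriv H) := hHC1.continuous_deriv le_rfl
  have hda : ∀ t, deriv a t = H t * a t := fun t => by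
    rw [hH]; exact (div_mul_cancel₀ _ (hane t)).symm
  set q : ℝ → ℝ := fun t => 2 * (H t) ^ 2 / a t with hqdef
  set F : ℝ → ℝ := fun t => -2 * (H t / a t) with hFdef
  have hq0 : ∀ t, 0 ≤ q t := fun t => div_nonneg (by positivity) (hpos t).le
  have hqC : Continuous q := (continuous_const.mul (hJC.pow 2)).div haC hane
  have hjC : Continuous (fun t => (-2 * deriv H t) / a t) :=
    (continuous_const.mul hdHC).div haC hane
  have hqInt : ∀ x y : ℝ, IntervalIntegrable q volume x y :=
    fun x y => hqC.intervalIntegrable x y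
  have haInt : ∀ x y : ℝ, IntervalIntegrable a volume x y :=
    fun x y => haC.intervalIntegrable x y
  -- derivative of the boundary term
  have hF' : ∀ t : ℝ, HasDerivAt F ((-2 * deriv H t) / a t + q t) t := by
    intro t
    have h1 : HasDerivAt (fun t => H t / a t)
        ((deriv H t * a t - H t * deriv a t) / (a t) ^ 2) t :=
      ((hHD t).hasDerivAt).div ((haD t).hasDerivAt) (hane t)
    have h2 := h1.const_mul (-2 : ℝ)
    refine HasDerivAt.congr_deriv h2 ?_
    simp only [hqdef]
    rw [hda t]
    field_simp [hane t]
    ring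
  -- fundamental theorem of calculus decomposition
  have key : ∀ x y : ℝ, (∫ t in x..y, (-2 * deriv H t) / a t)
      = (F y - F x) - ∫ t in x..y, q t := by
    intro x y
    have h1 : ∫ t in x..y, ((-2 * deriv H t) / a t + q t) = F y - F x :=
      intervalIntegral.integral_eq_sub_of_hasDerivAt
        (fun t _ => hF' t) ((hjC.add hqC).intervalIntegrable x y)
    have h2 : ∫ t in x..y, ((-2 * deriv H t) / a t + q t)
        = (∫ t in x..y, (-2 * deriv H t) / a t) + ∫ t in x..y, q t :=
      intervalIntegral.integral_add (hjC.intervalIntegrable x y) (hqInt x y)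
    linarith
  set S : ℝ × ℝ → ℝ := fun p => ∫ t in p.1..p.2, q t with hSdef
  have hF2 : Tendsto (fun p : ℝ × ℝ => F p.2) (atBot ×ˢ atTop) (nhds (-2 * Lp)) :=
    (hLp.const_mul (-2)).comp tendsto_snd
  have hF1 : Tendsto (fun p : ℝ × ℝ => F p.1) (atBot ×ˢ atTop) (nhds (-2 * Lm)) :=
    (hLm.const_mul (-2)).comp tendsto_fst
  have hzero' : Tendsto (fun p : ℝ × ℝ => (F p.2 - F p.1) - S p)
      (atBot ×ˢ atTop) (nhds 0) :=
    hzero.congr fun p => key p.1 p.2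
  have hSlim : Tendsto S (atBot ×ˢ atTop) (nhds ((-2 * Lp) - (-2 * Lm) - 0)) :=
    Tendsto.congr (fun p => by ring) ((hF2.sub hF1).sub hzero')
  -- monotonicity of the nonnegative integral
  have hmono : ∀ x u v y : ℝ, x ≤ u → v ≤ y →
      (∫ t in u..v, q t) ≤ S (x, y) := by
    intro x u v y hxu hvy
    have e1 : ((∫ t in x..u, q t) + ∫ t in u..v, q t) = ∫ t in x..v, q t :=
      intervalIntegral.integral_add_adjacent_intervals (hqInt x u) (hqInt u v)
    have e2 : ((∫ t in x..v, q t) + ∫ t in v..y, q t) = ∫ t in x..y, q t :=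
      intervalIntegral.integral_add_adjacent_intervals (hqInt x v) (hqInt v y)
    have n1 : 0 ≤ ∫ t in x..u, q t :=
      intervalIntegral.integral_nonneg hxu (fun t _ => hq0 t)
    have n2 : 0 ≤ ∫ t in v..y, q t :=
      intervalIntegral.integral_nonneg hvy (fun t _ => hq0 t)
    have e3 : S (x, y) = ∫ t in x..y, q t := rfl
    linarith
  -- pointwise lower bound q ≥ c·a where |H/a| is bounded below
  have hqa : ∀ c t : ℝ, c ^ 2 / 4 ≤ (H t / a t) ^ 2 → c ^ 2 / 2 * a t ≤ q t := by
    intro c t h4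
    have h5 : q t = 2 * (H t / a t) ^ 2 * a t := by
      simp only [hqdef]; field_simp [hane t]
    rw [h5]
    nlinarith [hpos t]
  have habs : ∀ c v : ℝ, |v - c| < |c| / 2 → c ^ 2 / 4 ≤ v ^ 2 := by
    intro c v h1
    have h2 : |c| - |v| ≤ |v - c| := by
      rw [abs_sub_comm]; exact abs_sub_abs_le_abs_sub _ _
    have h3 : |c| / 2 ≤ |v| := by linarith
    nlinarith [sq_abs v, sq_abs c, abs_nonneg v, abs_nonneg c]
  -- the future limit vanishes
  have hLp0 : Lp = 0 := by
    by_contra hne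
    have hc : (0:ℝ) < Lp ^ 2 / 2 := by positivity
    have hev : ∀ᶠ t in atTop, |H t / a t - Lp| < |Lp| / 2 := by
      have := Metric.tendsto_nhds.mp hLp (|Lp| / 2) (by positivity)
      simpa [Real.dist_eq] using this
    obtain ⟨T₀, hT₀⟩ := eventually_atTop.mp hev
    have hB : Tendsto (fun p : ℝ × ℝ =>
        Lp ^ 2 / 2 * ((∫ t in (0:ℝ)..p.2, a t) + -(∫ t in (0:ℝ)..T₀, a t)))
        (atBot ×ˢ atTop) atTop := by
      exact (tendsto_atTop_add_const_right _ _ (hfut.comp tendsto_snd)).const_mul_atTop hc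
    have hge : ∀ᶠ p : ℝ × ℝ in atBot ×ˢ atTop,
        Lp ^ 2 / 2 * ((∫ t in (0:ℝ)..p.2, a t) + -(∫ t in (0:ℝ)..T₀, a t)) ≤ S p := by
      filter_upwards [tendsto_fst.eventually (eventually_le_atBot T₀),
        tendsto_snd.eventually (eventually_ge_atTop T₀)] with p h1 h2
      have e3 : ((∫ t in (0:ℝ)..T₀, a t) + ∫ t in T₀..p.2, a t)
          = ∫ t in (0:ℝ)..p.2, a t :=
        intervalIntegral.integral_add_adjacent_intervals (haInt 0 T₀) (haInt T₀ p.2)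
      have hmon2 : (∫ t in T₀..p.2, Lp ^ 2 / 2 * a t) ≤ ∫ t in T₀..p.2, q t := by
        apply intervalIntegral.integral_mono_on h2
          ((continuous_const.mul haC).intervalIntegrable _ _) (hqInt _ _)
        intro t ht
        exact hqa Lp t (habs Lp _ (hT₀ t ht.1))
      rw [intervalIntegral.integral_const_mul] at hmon2
      have h6 := hmono p.1 T₀ p.2 p.2 h1 le_rfl
      have h7 : S (p.1, p.2) = S p := rfl
      nlinarith
    exact not_tendsto_atTop_of_tendsto_nhds hSlim (tendsto_atTop_mono' _ hge hB)
  -- the past limit vanishes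
  have hpast' : Tendsto (fun x : ℝ => ∫ t in x..(0:ℝ), a t) atBot atTop := by
    have h := hpast.comp tendsto_neg_atBot_atTop
    exact h.congr fun x => by simp
  have hLm0 : Lm = 0 := by
    by_contra hne
    have hc : (0:ℝ) < Lm ^ 2 / 2 := by positivity
    have hev : ∀ᶠ t in atBot, |H t / a t - Lm| < |Lm| / 2 := by
      have := Metric.tendsto_nhds.mp hLm (|Lm| / 2) (by positivity)
      simpa [Real.dist_eq] using this
    obtain ⟨T₁, hT₁⟩ := eventually_atBot.mp hev
    have hB : Tendsto (fun p : ℝ × ℝ =>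
        Lm ^ 2 / 2 * ((∫ t in p.1..(0:ℝ), a t) + -(∫ t in T₁..(0:ℝ), a t)))
        (atBot ×ˢ atTop) atTop := by
      exact (tendsto_atTop_add_const_right _ _ (hpast'.comp tendsto_fst)).const_mul_atTop hc
    have hge : ∀ᶠ p : ℝ × ℝ in atBot ×ˢ atTop,
        Lm ^ 2 / 2 * ((∫ t in p.1..(0:ℝ), a t) + -(∫ t in T₁..(0:ℝ), a t)) ≤ S p := by
      filter_upwards [tendsto_fst.eventually (eventually_le_atBot T₁),
        tendsto_snd.eventually (eventually_ge_atTop T₁)] with p h1 h2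
      have e3 : ((∫ t in p.1..T₁, a t) + ∫ t in T₁..(0:ℝ), a t)
          = ∫ t in p.1..(0:ℝ), a t :=
        intervalIntegral.integral_add_adjacent_intervals (haInt p.1 T₁) (haInt T₁ 0)
      have hmon2 : (∫ t in p.1..T₁, Lm ^ 2 / 2 * a t) ≤ ∫ t in p.1..T₁, q t := by
        apply intervalIntegral.integral_mono_on h1
          ((continuous_const.mul haC).intervalIntegrable _ _) (hqInt _ _)
        intro t ht
        exact hqa Lm t (habs Lm _ (hT₁ t ht.2))
      rw [intervalIntegral.integral_const_mul] at hmon2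
      have h6 := hmono p.1 p.1 T₁ p.2 le_rfl h2
      have h7 : S (p.1, p.2) = S p := rfl
      nlinarith
    exact not_tendsto_atTop_of_tendsto_nhds hSlim (tendsto_atTop_mono' _ hge hB)
  have hS0 : Tendsto S (atBot ×ˢ atTop) (nhds 0) := by
    have := hSlim
    rw [hLp0, hLm0] at this
    simpa using this
  -- conclude H ≡ 0
  have hH0 : ∀ t, H t = 0 := by
    intro t0
    by_contra hne
    have hqpos : 0 < q t0 := div_pos (by positivity) (hpos t0)
    have hopen : IsOpen {s : ℝ | 0 < q s} := isOpen_lt continuous_const hqC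
    obtain ⟨δ, hδ, hsub⟩ := Metric.isOpen_iff.mp hopen t0 hqpos
    have hlt : t0 - δ / 2 < t0 + δ / 2 := by linarith
    have hpos' : ∀ s ∈ Set.Ioo (t0 - δ / 2) (t0 + δ / 2), 0 < q s := by
      intro s hs
      apply hsub
      rw [Metric.mem_ball, Real.dist_eq, abs_lt]
      obtain ⟨hs1, hs2⟩ := hs
      constructor <;> linarith
    have hεpos : 0 < ∫ t in (t0 - δ / 2)..(t0 + δ / 2), q t :=
      intervalIntegral.intervalIntegral_pos_of_pos_on (hqInt _ _) hpos' hlt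
    have hgeS : ∀ᶠ p : ℝ × ℝ in atBot ×ˢ atTop,
        (∫ t in (t0 - δ / 2)..(t0 + δ / 2), q t) ≤ S p := by
      filter_upwards [tendsto_fst.eventually (eventually_le_atBot (t0 - δ / 2)),
        tendsto_snd.eventually (eventually_ge_atTop (t0 + δ / 2))] with p h1 h2
      exact hmono p.1 (t0 - δ / 2) (t0 + δ / 2) p.2 h1 h2
    have hltS : ∀ᶠ p : ℝ × ℝ in atBot ×ˢ atTop,
        S p < ∫ t in (t0 - δ / 2)..(t0 + δ / 2), q t :=
      hS0.eventually (gt_mem_nhds hεpos)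
    obtain ⟨p, hp1, hp2⟩ := (hgeS.and hltS).exists
    linarith
  refine ⟨hH0, a 0, fun t => ?_⟩
  have hd0 : ∀ s, deriv a s = 0 := fun s => by rw [hda s, hH0 s, zero_mul]
  exact is_const_of_deriv_eq_zero haD hd0 t 0
end

section
/- Let a : ℝ → ℝ be twice continuously differentiable with constants 0 < a_min ≤ a(t) ≤ a_max < ∞ for all t, and let H(t) = a'(t)/a(t) satisfy |H(t)| ≤ C and |H'(t)| ≤ C for all t for some constant C. Define I(T₋,T₊) = ∫_{T₋}^{T₊} (−2H'(t))/a(t) dt. Then: (i) if ∫_{T₋}^{T₊} H²/a dt → +∞ as T₋ → −∞, T₊ → +∞, then I(T₋,T₊) → −∞; (ii) if instead ∫_ℝ H²/a < ∞, then H(t) → 0 as t → ±∞ and I(T₋,T₊) converges to −2·∫_ℝ H(t)²/a(t) dt, which is strictly negative unless H is identically zero. -/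
open Filter MeasureTheory Set

lemma barbalat_aux (f : ℝ → ℝ) (C : ℝ) (hC : 0 < C)
    (hf : Differentiable ℝ f) (hf' : ∀ t, |deriv f t| ≤ C)
    (hint : Integrable (fun t => f t ^ 2)) :
    Tendsto f atTop (nhds 0) := by
  have hsq : Continuous fun t => f t ^ 2 := (hf.continuous.pow 2)
  have hlip : ∀ s t : ℝ, |f t - f s| ≤ C * |t - s| := by
    intro s t
    have := convex_univ.norm_image_sub_le_of_norm_hasDerivWithin_le
      (f' := deriv f)
      (fun x _ => (hf x).hasDerivAt.hasDerivWithinAt)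
      (fun x _ => by simpa [Real.norm_eq_abs] using hf' x)
      (Set.mem_univ s) (Set.mem_univ t)
    simpa [Real.norm_eq_abs] using this
  set F : ℝ → ℝ := fun t => ∫ x in (0:ℝ)..t, f x ^ 2 with hFdef
  have hFint : ∀ u v : ℝ, IntervalIntegrable (fun x => f x ^ 2) volume u v :=
    fun u v => hsq.intervalIntegrable u v
  have hsub : ∀ u v : ℝ, F v - F u = ∫ x in u..v, f x ^ 2 := by
    intro u v
    rw [hFdef]
    exact intervalIntegral.integral_interval_sub_left (hFint 0 v) (hFint 0 u)
  have hFmono : Monotone F := by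
    intro u v huv
    have h1 := hsub u v
    have h2 : (0:ℝ) ≤ ∫ x in u..v, f x ^ 2 :=
      intervalIntegral.integral_nonneg huv (fun x _ => sq_nonneg (f x))
    linarith
  set L : ℝ := ∫ x in Set.Ioi (0:ℝ), f x ^ 2 with hLdef
  have hFtends : Tendsto F atTop (nhds L) :=
    intervalIntegral_tendsto_integral_Ioi 0 hint.integrableOn tendsto_id
  have hFle : ∀ t, F t ≤ L := fun t => hFmono.ge_of_tendsto hFtends t
  rw [NormedAddCommGroup.tendsto_nhds_zero]
  intro ε hε
  have hc : 0 < ε ^ 3 / (8 * C) := by positivity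
  have hev : ∀ᶠ t in atTop, L - F t < ε ^ 3 / (8 * C) := by
    have h0 : Tendsto (fun t => L - F t) atTop (nhds (L - L)) :=
      tendsto_const_nhds.sub hFtends
    rw [sub_self] at h0
    exact h0.eventually_lt_const hc
  filter_upwards [hev] with t ht
  rw [Real.norm_eq_abs]
  by_contra hcon
  push_neg at hcon
  set δ : ℝ := ε / (2 * C) with hδdef
  have hδ : 0 < δ := by positivity
  have hlow : ∀ s ∈ Set.Icc t (t + δ), ε ^ 2 / 4 ≤ f s ^ 2 := by
    intro s hs
    have h1 : |f s - f t| ≤ C * |s - t| := hlip t s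
    have h2 : |s - t| ≤ δ := by
      rw [abs_of_nonneg (by linarith [hs.1])]
      linarith [hs.2]
    have h3 : C * |s - t| ≤ ε / 2 := by
      calc C * |s - t| ≤ C * δ := by nlinarith
        _ = ε / 2 := by rw [hδdef]; field_simp
    have h4 : ε / 2 ≤ |f s| := by
      have habs := abs_sub_abs_le_abs_sub (f t) (f s)
      rw [abs_sub_comm] at habs
      linarith
    calc ε ^ 2 / 4 = (ε / 2) ^ 2 := by ring
      _ ≤ |f s| ^ 2 := by nlinarith [abs_nonneg (f s)]
      _ = f s ^ 2 := sq_abs _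
  have hint2 : ε ^ 3 / (8 * C) ≤ ∫ x in t..(t + δ), f x ^ 2 := by
    have hm := intervalIntegral.integral_mono_on (by linarith : t ≤ t + δ)
      (intervalIntegrable_const (c := ε ^ 2 / 4)) (hFint t (t + δ)) hlow
    rw [intervalIntegral.integral_const] at hm
    have heq : (t + δ - t) • (ε ^ 2 / 4) = ε ^ 3 / (8 * C) := by
      rw [smul_eq_mul, hδdef]
      field_simp
      ring
    linarith [heq ▸ hm]
  have := hsub t (t + δ)
  have := hFle (t + δ)
  linarith

/-- Bounded oscillatory flat FRW models do not evade the ANEC obstruction: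
(i) if the bulk integral `∫ H²/a` diverges then the finite-interval ANEC integrals tend
to `−∞`; (ii) if `∫_ℝ H²/a < ∞` then `H → 0` at both ends and the ANEC integrals
converge to `−2 ∫_ℝ H²/a`, which is strictly negative unless `H ≡ 0`. -/
theorem bounded_oscillatory_flat_ANEC_obstruction
    (a H : ℝ → ℝ) (a_min a_max C : ℝ) (ha : ContDiff ℝ 2 a)
    (hmin : 0 < a_min) (hbound : ∀ t, a_min ≤ a t ∧ a t ≤ a_max)
    (hH : ∀ t, H t = deriv a t / a t)
    (hHb : ∀ t, |H t| ≤ C) (hH'b : ∀ t, |deriv H t| ≤ C) :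
    (Tendsto (fun p : ℝ × ℝ => ∫ t in p.1..p.2, (H t) ^ 2 / a t)
        (atBot ×ˢ atTop) atTop →
      Tendsto (fun p : ℝ × ℝ => ∫ t in p.1..p.2, (-2 * deriv H t) / a t)
        (atBot ×ˢ atTop) atBot) ∧
    (Integrable (fun t => (H t) ^ 2 / a t) →
      (Tendsto H atTop (nhds 0) ∧ Tendsto H atBot (nhds 0) ∧
        Tendsto (fun p : ℝ × ℝ => ∫ t in p.1..p.2, (-2 * deriv H t) / a t)
          (atBot ×ˢ atTop) (nhds (-2 * ∫ t : ℝ, (H t) ^ 2 / a t)) ∧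
        ((∃ t, H t ≠ 0) → -2 * (∫ t : ℝ, (H t) ^ 2 / a t) < 0))) := by
  have hCnn : 0 ≤ C := (abs_nonneg _).trans (hHb 0)
  have hapos : ∀ t, 0 < a t := fun t => hmin.trans_le (hbound t).1
  have hane : ∀ t, a t ≠ 0 := fun t => (hapos t).ne'
  have hHeq : H = fun t => deriv a t / a t := funext hH
  have haC1 : ContDiff ℝ 1 a := ha.of_le (by norm_num)
  have hac : Continuous a := haC1.continuous
  have had : Differentiable ℝ a := haC1.differentiable one_ne_zero
  have ha2 : ContDiff ℝ (1 + 1) a := by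
    have h21 : (2 : WithTop ℕ∞) = 1 + 1 := by norm_num
    rw [← h21]; exact ha
  have hderivaC1 : ContDiff ℝ 1 (deriv a) := (contDiff_succ_iff_deriv.1 ha2).2.2
  have hHC1 : ContDiff ℝ 1 H := by rw [hHeq]; exact hderivaC1.div haC1 hane
  have hHd : Differentiable ℝ H := hHC1.differentiable one_ne_zero
  have hHc : Continuous H := hHd.continuous
  have hH'c : Continuous (deriv H) := hHC1.continuous_deriv le_rfl
  -- derivative of the boundary term G = H/a
  have hGd : ∀ t, HasDerivAt (fun t => H t / a t)
      (deriv H t / a t - H t ^ 2 / a t) t := by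
    intro t
    have h1 : HasDerivAt H (deriv H t) t := (hHd t).hasDerivAt
    have h2 : HasDerivAt a (deriv a t) t := (had t).hasDerivAt
    have h3 := h1.div h2 (hane t)
    refine h3.congr_deriv ?_
    have hgen : ∀ x y z : ℝ, z ≠ 0 →
        x / z - (y / z) ^ 2 / z = (x * z - y / z * y) / z ^ 2 := by
      intro x y z hz; field_simp
    rw [hH t]
    exact (hgen _ _ _ (hane t)).symm
  have hDc : Continuous (fun t => deriv H t / a t - H t ^ 2 / a t) :=
    (hH'c.div hac hane).sub ((hHc.pow 2).div hac hane)
  have hQc : Continuous (fun t => H t ^ 2 / a t) := (hHc.pow 2).div hac hane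
  -- key integral identity
  have keyeq : ∀ T U : ℝ, (∫ t in T..U, (-2 * deriv H t) / a t) =
      -2 * (H U / a U - H T / a T) + (-2) * ∫ t in T..U, H t ^ 2 / a t := by
    intro T U
    have hI1 : (∫ t in T..U, (deriv H t / a t - H t ^ 2 / a t)) =
        H U / a U - H T / a T :=
      intervalIntegral.integral_eq_sub_of_hasDerivAt (fun t _ => hGd t)
        (hDc.intervalIntegrable T U)
    have hsplit : ∀ t : ℝ, (-2 * deriv H t) / a t =
        (-2) * (deriv H t / a t - H t ^ 2 / a t) + (-2) * (H t ^ 2 / a t) := by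
      intro t; field_simp; ring
    calc (∫ t in T..U, (-2 * deriv H t) / a t)
        = ∫ t in T..U, ((-2) * (deriv H t / a t - H t ^ 2 / a t)
            + (-2) * (H t ^ 2 / a t)) := by
          exact intervalIntegral.integral_congr (fun t _ => hsplit t)
      _ = (∫ t in T..U, (-2) * (deriv H t / a t - H t ^ 2 / a t))
            + ∫ t in T..U, (-2) * (H t ^ 2 / a t) := by
          exact intervalIntegral.integral_add
            ((hDc.const_smul (-2 : ℝ)).intervalIntegrable T U)
            ((hQc.const_smul (-2 : ℝ)).intervalIntegrable T U)
      _ = -2 * (H U / a U - H T / a T) + (-2) * ∫ t in T..U, H t ^ 2 / a t := by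
          rw [intervalIntegral.integral_const_mul, intervalIntegral.integral_const_mul, hI1]
  -- bound on the boundary term
  have hGb : ∀ t : ℝ, |H t / a t| ≤ C / a_min := by
    intro t
    rw [abs_div, abs_of_pos (hapos t)]
    exact div_le_div₀ hCnn (hHb t) hmin (hbound t).1
  constructor
  · -- part (i)
    intro hdiv
    have hbd : ∀ p : ℝ × ℝ, (∫ t in p.1..p.2, (-2 * deriv H t) / a t) ≤
        4 * (C / a_min) + (-2) * ∫ t in p.1..p.2, H t ^ 2 / a t := by
      intro p
      rw [keyeq p.1 p.2]
      have h1 := abs_le.1 (hGb p.1)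
      have h2 := abs_le.1 (hGb p.2)
      nlinarith [h1.1, h1.2, h2.1, h2.2]
    have htend : Tendsto (fun p : ℝ × ℝ =>
        4 * (C / a_min) + (-2) * ∫ t in p.1..p.2, H t ^ 2 / a t)
        (atBot ×ˢ atTop) atBot := by
      apply tendsto_atBot_add_const_left
      exact hdiv.const_mul_atTop_of_neg (by norm_num)
    exact tendsto_atBot_mono hbd htend
  · -- part (ii)
    intro hint
    have hamax : 0 < a_max := hmin.trans_le ((hbound 0).1.trans (hbound 0).2)
    have hH2int : Integrable (fun t => H t ^ 2) := by
      apply Integrable.mono' (hint.const_mul a_max) ((hHc.pow 2).aestronglyMeasurable)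
      filter_upwards with t
      rw [Real.norm_eq_abs, abs_of_nonneg (sq_nonneg _)]
      have h1 : a t * (H t ^ 2 / a t) = H t ^ 2 := by
        rw [mul_comm, div_mul_cancel₀ _ (hane t)]
      have h2 : 0 ≤ H t ^ 2 / a t := div_nonneg (sq_nonneg _) (hapos t).le
      simp only [Pi.pow_apply]
      nlinarith [(hbound t).2]
    have htop : Tendsto H atTop (nhds 0) :=
      barbalat_aux H (C + 1) (by linarith) hHd
        (fun t => (hH'b t).trans (by linarith)) hH2int
    have hbot : Tendsto H atBot (nhds 0) := by
      have hnegint : Integrable (fun t => H (-t) ^ 2) := hH2int.comp_neg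
      have hnd : Differentiable ℝ (fun t => H (-t)) :=
        hHd.comp differentiable_neg
      have hnd' : ∀ t, |deriv (fun s => H (-s)) t| ≤ C + 1 := by
        intro t
        rw [deriv_comp_neg, abs_neg]
        exact (hH'b _).trans (by linarith)
      have hb := barbalat_aux (fun t => H (-t)) (C + 1) (by linarith) hnd hnd' hnegint
      have := hb.comp tendsto_neg_atBot_atTop
      simpa [Function.comp_def] using this
    refine ⟨htop, hbot, ?_, ?_⟩
    · -- the limit of the ANEC integrals
      have hGtop : Tendsto (fun t => H t / a t) atTop (nhds 0) := by
        refine squeeze_zero_norm (a := fun t => |H t| / a_min) (fun t => ?_) ?_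
        · show ‖H t / a t‖ ≤ |H t| / a_min
          rw [Real.norm_eq_abs, abs_div, abs_of_pos (hapos t)]
          gcongr
          exact (hbound t).1
        · have := (htop.abs.div_const a_min)
          simpa using this
      have hGbot : Tendsto (fun t => H t / a t) atBot (nhds 0) := by
        refine squeeze_zero_norm (a := fun t => |H t| / a_min) (fun t => ?_) ?_
        · show ‖H t / a t‖ ≤ |H t| / a_min
          rw [Real.norm_eq_abs, abs_div, abs_of_pos (hapos t)]
          gcongr
          exact (hbound t).1
        · have := (hbot.abs.div_const a_min)
          simpa using this
      have hJ : Tendsto (fun p : ℝ × ℝ => ∫ t in p.1..p.2, H t ^ 2 / a t)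
          (atBot ×ˢ atTop) (nhds (∫ t : ℝ, H t ^ 2 / a t)) :=
        intervalIntegral_tendsto_integral hint tendsto_fst tendsto_snd
      have hB : Tendsto (fun p : ℝ × ℝ => H p.2 / a p.2 - H p.1 / a p.1)
          (atBot ×ˢ atTop) (nhds 0) := by
        have := (hGtop.comp tendsto_snd).sub (hGbot.comp tendsto_fst)
        simpa using this
      have hcomb := (hB.const_mul (-2 : ℝ)).add (hJ.const_mul (-2 : ℝ))
      have heqfun : (fun p : ℝ × ℝ => ∫ t in p.1..p.2, (-2 * deriv H t) / a t) =
          fun p : ℝ × ℝ => -2 * (H p.2 / a p.2 - H p.1 / a p.1)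
            + (-2) * ∫ t in p.1..p.2, H t ^ 2 / a t := by
        funext p; exact keyeq p.1 p.2
      rw [heqfun]
      simpa using hcomb
    · -- strict negativity
      rintro ⟨t0, ht0⟩
      have hnn : 0 ≤ fun t => H t ^ 2 / a t := by
        intro t; exact div_nonneg (sq_nonneg _) (hapos t).le
      have hpos : 0 < ∫ t : ℝ, H t ^ 2 / a t := by
        rw [integral_pos_iff_support_of_nonneg hnn hint]
        have hUopen : IsOpen {t : ℝ | 0 < H t ^ 2 / a t} :=
          isOpen_lt continuous_const hQc
        have hU0 : t0 ∈ {t : ℝ | 0 < H t ^ 2 / a t} := by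
          have : 0 < H t0 ^ 2 := pow_pos (abs_pos.2 ht0) 2 |>.trans_eq (sq_abs _)
          exact div_pos this (hapos t0)
        have hsub : {t : ℝ | 0 < H t ^ 2 / a t} ⊆
            Function.support (fun t => H t ^ 2 / a t) := fun x hx => ne_of_gt hx
        exact lt_of_lt_of_le (hUopen.measure_pos volume ⟨t0, hU0⟩)
          (measure_mono hsub)
      linarith
end

section
/- Let a : ℝ → ℝ be twice continuously differentiable, positive, nonconstant, and periodic with some period P > 0, and let H(t) = a'(t)/a(t). Then the finite-interval flat ANEC integrals I(T₋,T₊) = ∫_{T₋}^{T₊} (−2H'(t))/a(t) dt tend to −∞ as T₋ → −∞ and T₊ → +∞. Moreover ∫_{0}^{T} a(t) dt → +∞ and ∫_{−T}^{0} a(t) dt → +∞ as T → +∞, so the corresponding flat FRW spacetime is radially null geodesically complete in both directions. -/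
open Filter MeasureTheory

/-- Periodic flat FRW models (Corollary 4.5, flat case): a positive, nonconstant, `C²`,
periodic scale factor gives radially null complete flat FRW spacetime whose
finite-interval ANEC integrals tend to `−∞`. -/
theorem periodic_flat_FRW_ANEC_diverges
    (a H : ℝ → ℝ) (P : ℝ) (hP : 0 < P) (ha : ContDiff ℝ 2 a)
    (hpos : ∀ t, 0 < a t) (hper : Function.Periodic a P)
    (hnc : ∃ s t, a s ≠ a t)
    (hH : ∀ t, H t = deriv a t / a t) :
    Tendsto (fun p : ℝ × ℝ => ∫ t in p.1..p.2, (-2 * deriv H t) / a t)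
      (atBot ×ˢ atTop) atBot ∧
    Tendsto (fun T => ∫ t in (0:ℝ)..T, a t) atTop atTop ∧
    Tendsto (fun T => ∫ t in (-T)..(0:ℝ), a t) atTop atTop := by
  have hane : ∀ t, a t ≠ 0 := fun t => (hpos t).ne'
  have haC : Continuous a := ha.continuous
  have ha1 : ContDiff ℝ 1 a := ha.of_le (by norm_num)
  have hadiff : Differentiable ℝ a := ha1.differentiable one_ne_zero
  have hda : ContDiff ℝ 1 (deriv a) := by
    have := (contDiff_succ_iff_deriv (n := 1)).mp (by exact_mod_cast ha)
    exact this.2.2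
  have HEq : H = fun t => deriv a t / a t := funext hH
  have hHC1 : ContDiff ℝ 1 H := by
    rw [HEq]; exact hda.div ha1 hane
  have hHdiff : Differentiable ℝ H := hHC1.differentiable one_ne_zero
  have hHC : Continuous H := hHC1.continuous
  -- periodicity of deriv a, H
  have hdper : Function.Periodic (deriv a) P := by
    intro t
    have : (fun x => a (x + P)) = a := funext hper
    calc deriv a (t + P) = deriv (fun x => a (x + P)) t := (deriv_comp_add_const a P t).symm
      _ = deriv a t := by rw [this]
  have hHper : Function.Periodic H P := by
    rw [HEq]; exact hdper.div hper
  -- the auxiliary functions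
  set g : ℝ → ℝ := fun t => (H t) ^ 2 / a t with hg_def
  set φ : ℝ → ℝ := fun t => H t / a t with hφ_def
  have hgC : Continuous g := ((hHC.pow 2).div haC hane)
  have hφC : Continuous φ := hHC.div haC hane
  have hgper : Function.Periodic g P := fun t => by simp only [hg_def, hHper t, hper t]
  have hφper : Function.Periodic φ P := hHper.div hper
  have hgnonneg : ∀ t, 0 ≤ g t := fun t => div_nonneg (sq_nonneg _) (hpos t).le
  -- derivative of φ
  have hφderiv : ∀ t, HasDerivAt φ (deriv H t / a t - g t) t := by
    intro t
    have h1 : HasDerivAt H (deriv H t) t := (hHdiff t).hasDerivAt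
    have h2 : HasDerivAt a (deriv a t) t := (hadiff t).hasDerivAt
    have := h1.div h2 (hane t)
    have h3 : a t ≠ 0 := hane t
    have hA : (0:ℝ) < a t ^ 2 := by positivity
    have heq : deriv H t / a t - g t = (deriv H t * a t - H t * deriv a t) / a t ^ 2 := by
      have hg_eq : g t = H t * H t / a t := by rw [hg_def]; simp only []; rw [sq]
      have hda_eq : deriv a t = H t * a t := by rw [hH t]; field_simp
      rw [hg_eq, hda_eq, eq_div_iff hA.ne']
      field_simp
    rw [heq]
    exact this
  -- pointwise identity for the integrand
  have hint_eq : ∀ t, (-2 * deriv H t) / a t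
      = -2 * (deriv H t / a t - g t) + (-2) * g t := by
    intro t
    ring
  -- positivity at some point
  obtain ⟨t₀, ht₀⟩ : ∃ t₀, deriv a t₀ ≠ 0 := by
    by_contra h
    push_neg at h
    obtain ⟨s, t, hst⟩ := hnc
    exact hst (is_const_of_deriv_eq_zero hadiff h s t)
  have hgt₀ : 0 < g t₀ := by
    have hH0 : H t₀ ≠ 0 := by
      rw [hH t₀]
      exact div_ne_zero ht₀ (hane t₀)
    exact div_pos (by positivity) (hpos t₀)
  -- positive integral of g over one period
  have hgint : ∀ t₁ t₂ : ℝ, IntervalIntegrable g volume t₁ t₂ :=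
    fun t₁ t₂ => hgC.intervalIntegrable _ _
  have h₀ : 0 < ∫ x in (0:ℝ)..P, g x := by
    obtain ⟨y, hy, hgy⟩ := hgper.exists_mem_Ico₀ hP t₀
    refine intervalIntegral.integral_pos hP hgC.continuousOn (fun x _ => hgnonneg x) ?_
    exact ⟨y, ⟨hy.1, hy.2.le⟩, by rw [← hgy]; exact hgt₀⟩
  -- primitive of g
  set A : ℝ → ℝ := fun x => ∫ t in (0:ℝ)..x, g t with hA_def
  have hAtop : Tendsto A atTop atTop :=
    hgper.tendsto_atTop_intervalIntegral_of_pos h₀ hP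
  have hAbot : Tendsto A atBot atBot :=
    hgper.tendsto_atBot_intervalIntegral_of_pos h₀ hP
  have hGsplit : ∀ x y : ℝ, (∫ t in x..y, g t) = A y - A x := by
    intro x y
    have := intervalIntegral.integral_add_adjacent_intervals (hgint 0 x) (hgint x y)
    rw [hA_def]; simp only []; linarith
  -- bound on φ
  obtain ⟨M, hM⟩ : ∃ M, ∀ t, |φ t| ≤ M := by
    obtain ⟨C, hC⟩ := (isCompact_Icc (a := (0:ℝ)) (b := P)).exists_bound_of_continuousOn
      hφC.continuousOn
    refine ⟨C, fun t => ?_⟩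
    obtain ⟨y, hy, hφy⟩ := hφper.exists_mem_Ico₀ hP t
    rw [hφy]
    simpa [Real.norm_eq_abs] using hC y ⟨hy.1, hy.2.le⟩
  -- the main integral identity
  have hmain : ∀ x y : ℝ, (∫ t in x..y, (-2 * deriv H t) / a t)
      = -2 * (φ y - φ x) + (-2) * (A y - A x) := by
    intro x y
    have hD : ∀ t, deriv φ t = deriv H t / a t - g t := fun t => (hφderiv t).deriv
    have hDC : Continuous (fun t => deriv H t / a t - g t) := by
      have hdHC : Continuous (deriv H) := by
        have := (contDiff_succ_iff_deriv (n := 0)).mp (by exact_mod_cast hHC1)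
        exact this.2.2.continuous
      exact (hdHC.div haC hane).sub hgC
    have hDint : IntervalIntegrable (fun t => deriv H t / a t - g t) volume x y :=
      hDC.intervalIntegrable _ _
    calc (∫ t in x..y, (-2 * deriv H t) / a t)
        = ∫ t in x..y, (-2 * (deriv H t / a t - g t) + (-2) * g t) := by
          exact intervalIntegral.integral_congr (fun t _ => hint_eq t)
      _ = (∫ t in x..y, -2 * (deriv H t / a t - g t)) + ∫ t in x..y, (-2) * g t := by
          exact intervalIntegral.integral_add (hDint.const_mul _) ((hgint x y).const_mul _)
      _ = -2 * (∫ t in x..y, (deriv H t / a t - g t)) + (-2) * ∫ t in x..y, g t := by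
          rw [intervalIntegral.integral_const_mul, intervalIntegral.integral_const_mul]
      _ = -2 * (φ y - φ x) + (-2) * (A y - A x) := by
          rw [intervalIntegral.integral_eq_sub_of_hasDerivAt (fun t _ => hφderiv t) hDint,
            hGsplit x y]
  refine ⟨?_, ?_, ?_⟩
  · -- main ANEC divergence
    have hbound : ∀ p : ℝ × ℝ, (∫ t in p.1..p.2, (-2 * deriv H t) / a t)
        ≤ 4 * M + (-2) * (A p.2 - A p.1) := by
      intro p
      rw [hmain p.1 p.2]
      have h1 := abs_le.mp (hM p.1)
      have h2 := abs_le.mp (hM p.2)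
      nlinarith [h1.1, h1.2, h2.1, h2.2]
    have hG : Tendsto (fun p : ℝ × ℝ => A p.2 - A p.1) (atBot ×ˢ atTop) atTop := by
      have h1 : Tendsto (fun p : ℝ × ℝ => A p.2) (atBot ×ˢ atTop) atTop :=
        hAtop.comp tendsto_snd
      have h2 : Tendsto (fun p : ℝ × ℝ => -A p.1) (atBot ×ˢ atTop) atTop :=
        (tendsto_neg_atBot_atTop.comp hAbot).comp tendsto_fst
      simpa [sub_eq_add_neg] using Filter.Tendsto.atTop_add_atTop h1 h2
    have hRHS : Tendsto (fun p : ℝ × ℝ => 4 * M + (-2) * (A p.2 - A p.1))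
        (atBot ×ˢ atTop) atBot := by
      apply tendsto_atBot_add_const_left
      have := hG.const_mul_atTop (show (0:ℝ) < 2 by norm_num)
      have hneg : Tendsto (fun p : ℝ × ℝ => -(2 * (A p.2 - A p.1))) (atBot ×ˢ atTop) atBot :=
        tendsto_neg_atTop_atBot.comp this
      convert hneg using 2 with p
      ring
    exact tendsto_atBot_mono hbound hRHS
  · -- forward null completeness
    have haint : ∀ t₁ t₂ : ℝ, IntervalIntegrable a volume t₁ t₂ :=
      fun t₁ t₂ => haC.intervalIntegrable _ _
    have h₀a : 0 < ∫ x in (0:ℝ)..P, a x :=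
      intervalIntegral.intervalIntegral_pos_of_pos (haint 0 P) hpos hP
    exact hper.tendsto_atTop_intervalIntegral_of_pos h₀a hP
  · -- backward null completeness
    have haint : ∀ t₁ t₂ : ℝ, IntervalIntegrable a volume t₁ t₂ :=
      fun t₁ t₂ => haC.intervalIntegrable _ _
    have h₀a : 0 < ∫ x in (0:ℝ)..P, a x :=
      intervalIntegral.intervalIntegral_pos_of_pos (haint 0 P) hpos hP
    have hAbot' : Tendsto (fun x => ∫ t in (0:ℝ)..x, a t) atBot atBot :=
      hper.tendsto_atBot_intervalIntegral_of_pos h₀a hP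
    have hcomp : Tendsto (fun T : ℝ => ∫ t in (0:ℝ)..(-T), a t) atTop atBot :=
      hAbot'.comp tendsto_neg_atTop_atBot
    have : Tendsto (fun T : ℝ => -∫ t in (0:ℝ)..(-T), a t) atTop atTop :=
      tendsto_neg_atBot_atTop.comp hcomp
    convert this using 2 with T
    rw [← intervalIntegral.integral_symm]
end

section
/- Let a : ℝ → ℝ be twice continuously differentiable, positive, nonconstant, and periodic with some period P > 0, and let H(t) = a'(t)/a(t). Then the finite-interval open-FRW ANEC integrals I(T₋,T₊) = ∫_{T₋}^{T₊} (−2·(H'(t) + 1/a(t)²))/a(t) dt tend to −∞ as T₋ → −∞ and T₊ → +∞. -/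
open Filter MeasureTheory

set_option maxHeartbeats 1000000 in
/-- Periodic open FRW models (Corollary 4.5, open case): for a positive, nonconstant,
`C²`, periodic scale factor, the open (`k = −1`) finite-interval ANEC integrals tend
to `−∞`. -/
theorem periodic_open_FRW_ANEC_diverges
    (a H : ℝ → ℝ) (P : ℝ) (hP : 0 < P) (ha : ContDiff ℝ 2 a)
    (hpos : ∀ t, 0 < a t) (hper : Function.Periodic a P)
    (hnc : ∃ s t, a s ≠ a t)
    (hH : ∀ t, H t = deriv a t / a t) :
    Tendsto (fun p : ℝ × ℝ =>
        ∫ t in p.1..p.2, (-2 * (deriv H t + 1 / (a t) ^ 2)) / a t)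
      (atBot ×ˢ atTop) atBot := by
  have hane : ∀ t, a t ≠ 0 := fun t => (hpos t).ne'
  have hda : ContDiff ℝ 1 (deriv a) := by
    have : ContDiff ℝ (1 + 1) a := by exact_mod_cast ha
    exact (contDiff_succ_iff_deriv.mp this).2.2
  have ha1 : ContDiff ℝ 1 a := ha.of_le one_le_two
  have hHeq : H = fun t => deriv a t / a t := funext hH
  have hH1 : ContDiff ℝ 1 H := by
    rw [hHeq]; exact hda.div ha1 hane
  have hHc : Continuous H := hH1.continuous
  have hHd : Differentiable ℝ H := hH1.differentiable one_ne_zero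
  have hcdH : Continuous (deriv H) := by
    have : ContDiff ℝ (0 + 1) H := by exact_mod_cast hH1
    exact ((contDiff_succ_iff_deriv.mp this).2.2).continuous
  have hdiffa : Differentiable ℝ a := ha.differentiable (by norm_num)
  -- the auxiliary function g = H/a and its derivative
  set g : ℝ → ℝ := fun t => H t / a t with hgdef
  set g' : ℝ → ℝ := fun t => (deriv H t * a t - H t * deriv a t) / (a t) ^ 2 with hg'def
  have hgderiv : ∀ t, HasDerivAt g (g' t) t := fun t =>
    ((hHd t).hasDerivAt).div ((hdiffa t).hasDerivAt) (hane t)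
  have hg'cont : Continuous g' :=
    ((hcdH.mul hdiffa.continuous).sub (hHc.mul hda.continuous)).div
      (hdiffa.continuous.pow 2) (fun t => pow_ne_zero 2 (hane t))
  have hgcont : Continuous g := hHc.div hdiffa.continuous hane
  -- pointwise decomposition of the integrand
  set φ : ℝ → ℝ := fun t => 2 * (H t) ^ 2 / a t + 2 / (a t) ^ 3 with hφdef
  have hφcont : Continuous φ :=
    (((continuous_const.mul (hHc.pow 2)).div hdiffa.continuous hane).add
      (continuous_const.div (hdiffa.continuous.pow 3) fun t => pow_ne_zero 3 (hane t)))
  have hdecomp : ∀ t, (-2 * (deriv H t + 1 / (a t) ^ 2)) / a t = -2 * g' t - φ t := by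
    intro t
    have h1 : H t = deriv a t / a t := hH t
    have h0 : a t ≠ 0 := hane t
    simp only [hg'def, hφdef, h1]
    field_simp
    ring
  -- periodicity of g and a bound
  have hdaper : Function.Periodic (deriv a) P := by
    intro t
    have : (fun s => a (s + P)) = a := funext hper
    calc deriv a (t + P) = deriv (fun s => a (s + P)) t := (deriv_comp_add_const a P t).symm
      _ = deriv a t := by rw [this]
  have hHper : Function.Periodic H P := by
    intro t; rw [hH, hH, hdaper t, hper t]
  have hgper : Function.Periodic g P := by
    intro t; simp only [hgdef, hHper t, hper t]
  -- max of a on [0,P]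
  obtain ⟨x, hx, hxmax⟩ := isCompact_Icc.exists_isMaxOn (Set.nonempty_Icc.mpr hP.le)
    (hdiffa.continuous.continuousOn (s := Set.Icc (0:ℝ) P))
  have haM : ∀ t, a t ≤ a x := by
    intro t
    obtain ⟨y, hy, hxy⟩ := hper.exists_mem_Ico₀ hP t
    rw [hxy]; exact hxmax (Set.Ico_subset_Icc_self hy)
  set c : ℝ := 2 / (a x) ^ 3 with hcdef
  have hc0 : 0 < c := div_pos two_pos (pow_pos (hpos x) 3)
  have hφge : ∀ t, c ≤ φ t := by
    intro t
    have h1 : 0 ≤ 2 * (H t) ^ 2 / a t := div_nonneg (by positivity) (hpos t).le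
    have h2 : c ≤ 2 / (a t) ^ 3 := by
      apply div_le_div_of_nonneg_left (by norm_num) (pow_pos (hpos t) 3)
      exact pow_le_pow_left₀ (hpos t).le (haM t) 3
    simp only [hφdef]
    linarith
  -- bound on |g|
  obtain ⟨z, hz, hzmax⟩ := isCompact_Icc.exists_isMaxOn (Set.nonempty_Icc.mpr hP.le)
    (hgcont.abs.continuousOn (s := Set.Icc (0:ℝ) P))
  set K : ℝ := |g z| with hKdef
  have hgK : ∀ t, |g t| ≤ K := by
    intro t
    obtain ⟨y, hy, hxy⟩ := hgper.exists_mem_Ico₀ hP t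
    calc |g t| = |g y| := by rw [hxy]
      _ ≤ K := hzmax (Set.Ico_subset_Icc_self hy)
  -- the key integral estimate
  have hbound : ∀ p : ℝ × ℝ, p.1 ≤ p.2 →
      (∫ t in p.1..p.2, (-2 * (deriv H t + 1 / (a t) ^ 2)) / a t)
        ≤ 4 * K - c * (p.2 - p.1) := by
    rintro ⟨T₁, T₂⟩ hle
    simp only
    have heq : (∫ t in T₁..T₂, (-2 * (deriv H t + 1 / (a t) ^ 2)) / a t)
        = (∫ t in T₁..T₂, (-2) * g' t) - ∫ t in T₁..T₂, φ t := by
      rw [← intervalIntegral.integral_sub (f := fun t => (-2) * g' t) (g := fun t => φ t)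
        ((continuous_const.mul hg'cont : Continuous fun t => (-2) * g' t).intervalIntegrable T₁ T₂)
        (hφcont.intervalIntegrable T₁ T₂)]
      exact intervalIntegral.integral_congr fun t _ => hdecomp t
    rw [heq]
    have hFTC : (∫ t in T₁..T₂, (-2) * g' t) = -2 * (g T₂ - g T₁) := by
      rw [intervalIntegral.integral_const_mul,
        intervalIntegral.integral_eq_sub_of_hasDerivAt (fun t _ => hgderiv t)
          (hg'cont.intervalIntegrable T₁ T₂)]
    rw [hFTC]
    have h1 : -2 * (g T₂ - g T₁) ≤ 4 * K := by
      have := hgK T₁; have := hgK T₂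
      have h1 := abs_le.mp (hgK T₁)
      have h2 := abs_le.mp (hgK T₂)
      nlinarith
    have h2 : c * (T₂ - T₁) ≤ ∫ t in T₁..T₂, φ t := by
      have := intervalIntegral.integral_mono_on hle (intervalIntegrable_const (c := c) (μ := MeasureTheory.volume) (a := T₁) (b := T₂))
        (hφcont.intervalIntegrable T₁ T₂) (fun t _ => hφge t)
      rw [intervalIntegral.integral_const, smul_eq_mul] at this
      linarith
    linarith
  -- conclude
  have hev : ∀ᶠ p : ℝ × ℝ in atBot ×ˢ atTop, p.1 ≤ p.2 := by
    filter_upwards [(eventually_le_atBot (0:ℝ)).prod_mk (eventually_ge_atTop (0:ℝ))] with p hp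
    exact le_trans hp.1 hp.2
  have htend : Tendsto (fun p : ℝ × ℝ => 4 * K - c * (p.2 - p.1)) (atBot ×ˢ atTop) atBot := by
    have h1 : Tendsto (fun p : ℝ × ℝ => p.2 - p.1) (atBot ×ˢ atTop) atTop := by
      have := Tendsto.atTop_add_atTop (tendsto_snd (f := atBot (α := ℝ)))
        (tendsto_neg_atBot_atTop.comp (tendsto_fst (g := atTop (α := ℝ))))
      simpa [sub_eq_add_neg] using this
    have h2 : Tendsto (fun p : ℝ × ℝ => c * (p.2 - p.1)) (atBot ×ˢ atTop) atTop :=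
      h1.const_mul_atTop hc0
    have h3 := tendsto_neg_atTop_atBot.comp h2
    have h4 := tendsto_atBot_add_const_left (atBot ×ˢ atTop) (4 * K) h3
    simpa [sub_eq_add_neg, Function.comp] using h4
  exact tendsto_atBot_mono' _ (hev.mono fun p hp => hbound p hp) htend
end

section
/- Let a : ℝ → ℝ be twice continuously differentiable with a(t) ≥ a_min > 0 for all t, let H(t) = a'(t)/a(t) satisfy |H(t)| ≤ H_max for all t, and define the closed-FRW finite-interval ANEC integral I(T₋,T₊) = ∫_{T₋}^{T₊} (−2·(H'(t) − 1/a(t)²))/a(t) dt. Suppose ∫_{T₋}^{T₊} a(t)^{−3} dt → +∞ as T₋ → −∞, T₊ → +∞, while ∫_ℝ H(t)²/a(t) dt < ∞. Then I(T₋,T₊) → +∞ as T₋ → −∞ and T₊ → +∞. -/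
open Filter MeasureTheory

/-- Theorem 5.1(a): in closed (`k = +1`) FRW with bounded `H` and `a` bounded away from
zero, if `∫ a⁻³` diverges while `∫_ℝ H²/a < ∞`, then the closed-branch finite-interval
ANEC integrals tend to `+∞`. -/
theorem closed_FRW_ANEC_diverges_to_plus_infinity
    (a H : ℝ → ℝ) (a_min H_max : ℝ) (ha : ContDiff ℝ 2 a)
    (hmin : 0 < a_min) (hamin : ∀ t, a_min ≤ a t)
    (hH : ∀ t, H t = deriv a t / a t) (hHb : ∀ t, |H t| ≤ H_max)
    (hdiv : Tendsto (fun p : ℝ × ℝ => ∫ t in p.1..p.2, 1 / (a t) ^ 3)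
      (atBot ×ˢ atTop) atTop)
    (hint : Integrable (fun t => (H t) ^ 2 / a t)) :
    Tendsto (fun p : ℝ × ℝ =>
        ∫ t in p.1..p.2, (-2 * (deriv H t - 1 / (a t) ^ 2)) / a t)
      (atBot ×ˢ atTop) atTop := by
  have hapos : ∀ t, 0 < a t := fun t => lt_of_lt_of_le hmin (hamin t)
  have hane : ∀ t, a t ≠ 0 := fun t => (hapos t).ne'
  have ha2 : ContDiff ℝ ((1 : ℕ) + 1) a := by exact_mod_cast ha
  have hdiffa : Differentiable ℝ a := (contDiff_succ_iff_deriv.mp ha2).1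
  have hg1 : ContDiff ℝ 1 (deriv a) := by
    exact_mod_cast (contDiff_succ_iff_deriv.mp ha2).2.2
  have hdiffg : Differentiable ℝ (deriv a) := hg1.differentiable one_ne_zero
  have hcontg' : Continuous (deriv (deriv a)) := hg1.continuous_deriv le_rfl
  have hconta : Continuous a := hdiffa.continuous
  have hcontg : Continuous (deriv a) := hdiffg.continuous
  have hHeq : H = fun t => deriv a t / a t := funext hH
  have hHderiv : ∀ t, HasDerivAt H
      ((deriv (deriv a) t * a t - deriv a t * deriv a t) / (a t) ^ 2) t := by
    intro t
    rw [hHeq]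
    exact ((hdiffg t).hasDerivAt).div ((hdiffa t).hasDerivAt) (hane t)
  have hderivH : deriv H = fun t =>
      (deriv (deriv a) t * a t - deriv a t * deriv a t) / (a t) ^ 2 :=
    funext fun t => (hHderiv t).deriv
  have hcontH : Continuous H := by
    rw [hHeq]; exact hcontg.div hconta hane
  have hcontH' : Continuous (deriv H) := by
    rw [hderivH]
    exact ((hcontg'.mul hconta).sub (hcontg.mul hcontg)).div (hconta.pow 2)
      fun t => pow_ne_zero _ (hane t)
  have hfderiv : ∀ t, HasDerivAt (fun t => H t / a t)
      (deriv H t / a t - (H t) ^ 2 / a t) t := by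
    intro t
    have hd : HasDerivAt H (deriv H t) t := by rw [hderivH]; exact hHderiv t
    have h1 : HasDerivAt (fun t => H t / a t)
        ((deriv H t * a t - H t * deriv a t) / a t ^ 2) t :=
      hd.div ((hdiffa t).hasDerivAt) (hane t)
    convert h1 using 1
    have hat : deriv a t = H t * a t := by
      rw [hH t, div_mul_cancel₀ _ (hane t)]
    rw [hat]
    field_simp [hane t]
  have hi1 : ∀ T₁ T₂ : ℝ, IntervalIntegrable
      (fun t => deriv H t / a t - (H t) ^ 2 / a t) volume T₁ T₂ :=
    fun T₁ T₂ => ((hcontH'.div hconta hane).sub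
      ((hcontH.pow 2).div hconta hane)).intervalIntegrable T₁ T₂
  have hi2 : ∀ T₁ T₂ : ℝ, IntervalIntegrable
      (fun t => (H t) ^ 2 / a t) volume T₁ T₂ :=
    fun T₁ T₂ => ((hcontH.pow 2).div hconta hane).intervalIntegrable T₁ T₂
  have hi3 : ∀ T₁ T₂ : ℝ, IntervalIntegrable
      (fun t => 1 / (a t) ^ 3) volume T₁ T₂ :=
    fun T₁ T₂ => (continuous_const.div (hconta.pow 3)
      fun t => pow_ne_zero _ (hane t)).intervalIntegrable T₁ T₂
  have key : ∀ T₁ T₂ : ℝ,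
      (∫ t in T₁..T₂, (-2 * (deriv H t - 1 / (a t) ^ 2)) / a t)
      = -2 * (H T₂ / a T₂ - H T₁ / a T₁)
        + (-2 * (∫ t in T₁..T₂, (H t) ^ 2 / a t)
        + 2 * (∫ t in T₁..T₂, 1 / (a t) ^ 3)) := by
    intro T₁ T₂
    have hftc : (∫ t in T₁..T₂, (deriv H t / a t - (H t) ^ 2 / a t))
        = H T₂ / a T₂ - H T₁ / a T₁ :=
      intervalIntegral.integral_eq_sub_of_hasDerivAt (fun t _ => hfderiv t)
        (hi1 T₁ T₂)
    have hintegrand : ∀ t, (-2 * (deriv H t - 1 / (a t) ^ 2)) / a t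
        = -2 * (deriv H t / a t - (H t) ^ 2 / a t)
          + (-2 * ((H t) ^ 2 / a t) + 2 * (1 / (a t) ^ 3)) := by
      intro t
      field_simp [hane t]
      ring
    rw [intervalIntegral.integral_congr (g := fun t =>
      -2 * (deriv H t / a t - (H t) ^ 2 / a t)
        + (-2 * ((H t) ^ 2 / a t) + 2 * (1 / (a t) ^ 3)))
      (fun t _ => hintegrand t)]
    rw [intervalIntegral.integral_add ((hi1 T₁ T₂).const_mul _)
      (((hi2 T₁ T₂).const_mul _).add ((hi3 T₁ T₂).const_mul _)),
      intervalIntegral.integral_add ((hi2 T₁ T₂).const_mul _)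
      ((hi3 T₁ T₂).const_mul _),
      intervalIntegral.integral_const_mul, intervalIntegral.integral_const_mul,
      intervalIntegral.integral_const_mul, hftc]
  have hHmax : 0 ≤ H_max := (abs_nonneg _).trans (hHb 0)
  have hbd : ∀ t, |H t / a t| ≤ H_max / a_min := by
    intro t
    rw [abs_div, abs_of_pos (hapos t)]
    exact div_le_div₀ hHmax (hHb t) hmin (hamin t)
  set L := ∫ t, (H t) ^ 2 / a t with hL
  set C := 4 * (H_max / a_min) + 2 * L with hC
  have hlim : Tendsto (fun p : ℝ × ℝ =>
      2 * (∫ t in p.1..p.2, 1 / (a t) ^ 3) - C) (atBot ×ˢ atTop) atTop := by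
    have h2 : Tendsto (fun p : ℝ × ℝ => 2 * (∫ t in p.1..p.2, 1 / (a t) ^ 3))
        (atBot ×ˢ atTop) atTop := hdiv.const_mul_atTop (by norm_num)
    simpa [sub_eq_add_neg] using tendsto_atTop_add_const_right _ (-C) h2
  apply tendsto_atTop_mono' _ _ hlim
  filter_upwards [(eventually_le_atBot (0 : ℝ)).prod_inl atTop,
    (eventually_ge_atTop (0 : ℝ)).prod_inr atBot] with p h1 h2
  have hle : p.1 ≤ p.2 := h1.trans h2
  rw [key p.1 p.2]
  have hK : (∫ t in p.1..p.2, (H t) ^ 2 / a t) ≤ L := by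
    rw [intervalIntegral.integral_of_le hle]
    exact setIntegral_le_integral hint
      (Filter.Eventually.of_forall fun t =>
        div_nonneg (sq_nonneg _) (hapos t).le)
  have hb1 := abs_le.mp (hbd p.1)
  have hb2 := abs_le.mp (hbd p.2)
  have : -2 * (H p.2 / a p.2 - H p.1 / a p.1) ≥ -4 * (H_max / a_min) := by
    nlinarith [hb1.1, hb1.2, hb2.1, hb2.2]
  linarith
end

section
/- Let a : ℝ → ℝ be twice continuously differentiable with a(t) > 0 for all t, let H(t) = a'(t)/a(t) satisfy |H(t)| ≤ H_max for all t, and suppose ∫_ℝ a(t)^{−3} dt < ∞ and ∫_ℝ H(t)²/a(t) dt < ∞. Then a(t) → +∞ as t → +∞ and as t → −∞, H(t)/a(t) → 0 as t → ±∞, and the closed-FRW finite-interval ANEC integrals I(T₋,T₊) = ∫_{T₋}^{T₊} (−2·(H'(t) − 1/a(t)²))/a(t) dt converge to a finite limit as T₋ → −∞ and T₊ → +∞, namely 2·∫_ℝ (1/a(t)³ − H(t)²/a(t)) dt. -/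
open Filter MeasureTheory

private lemma small_interval_tendsto {f : ℝ → ℝ} (hc : Continuous f)
    (hi : Integrable f) :
    Tendsto (fun t => ∫ x in t..(t+1), f x) atTop (nhds 0) ∧
    Tendsto (fun t => ∫ x in t..(t+1), f x) atBot (nhds 0) := by
  have hII : ∀ u v : ℝ, IntervalIntegrable f volume u v := fun u v =>
    hc.intervalIntegrable u v
  constructor
  · have h1 : Tendsto (fun t : ℝ => ∫ x in (0:ℝ)..t, f x) atTop
        (nhds (∫ x in Set.Ioi (0:ℝ), f x)) :=
      intervalIntegral_tendsto_integral_Ioi 0 hi.integrableOn tendsto_id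
    have h2 : Tendsto (fun t : ℝ => ∫ x in (0:ℝ)..(t+1), f x) atTop
        (nhds (∫ x in Set.Ioi (0:ℝ), f x)) :=
      intervalIntegral_tendsto_integral_Ioi 0 hi.integrableOn
        (tendsto_atTop_add_const_right _ 1 tendsto_id)
    have := h2.sub h1
    rw [sub_self] at this
    refine this.congr fun t => ?_
    rw [← intervalIntegral.integral_add_adjacent_intervals (hII 0 t) (hII t (t+1))]
    ring
  · have h1 : Tendsto (fun t : ℝ => ∫ x in t..(0:ℝ), f x) atBot
        (nhds (∫ x in Set.Iic (0:ℝ), f x)) :=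
      intervalIntegral_tendsto_integral_Iic 0 hi.integrableOn tendsto_id
    have h2 : Tendsto (fun t : ℝ => ∫ x in (t+1)..(0:ℝ), f x) atBot
        (nhds (∫ x in Set.Iic (0:ℝ), f x)) :=
      intervalIntegral_tendsto_integral_Iic 0 hi.integrableOn
        (tendsto_atBot_add_const_right _ 1 tendsto_id)
    have := h1.sub h2
    rw [sub_self] at this
    refine this.congr fun t => ?_
    rw [← intervalIntegral.integral_add_adjacent_intervals (hII t (t+1)) (hII (t+1) 0)]
    ring

private lemma tendsto_a_atTop {a : ℝ → ℝ} {H_max : ℝ} {l : Filter ℝ}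
    (hpos : ∀ t, 0 < a t) (hcont : Continuous a) (hHm : 0 ≤ H_max)
    (hlip : ∀ s t : ℝ, a s ≤ a t * Real.exp (H_max * |s - t|))
    (hsmall : Tendsto (fun t => ∫ x in t..(t+1), 1 / (a x) ^ 3) l (nhds 0)) :
    Tendsto a l atTop := by
  rw [tendsto_atTop]
  intro M
  set M' : ℝ := max M 1 with hM'
  have hM'pos : 0 < M' := lt_of_lt_of_le one_pos (le_max_right _ _)
  set c : ℝ := 1 / (M' * Real.exp H_max) ^ 3 with hc
  have hcpos : 0 < c := by positivity
  have hev : ∀ᶠ t in l, (∫ x in t..(t+1), 1 / (a x) ^ 3) < c :=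
    hsmall.eventually (gt_mem_nhds hcpos)
  filter_upwards [hev] with t ht
  by_contra hMa
  push_neg at hMa
  have haM' : a t ≤ M' := le_trans hMa.le (le_max_left _ _)
  have hbound : ∀ x ∈ Set.Icc t (t+1), c ≤ 1 / (a x) ^ 3 := by
    intro x hx
    have hax : a x ≤ M' * Real.exp H_max := by
      refine le_trans (hlip x t) ?_
      have h1 : |x - t| ≤ 1 := by
        rw [abs_le]; constructor <;> [linarith [hx.1]; linarith [hx.2]]
      have : Real.exp (H_max * |x - t|) ≤ Real.exp H_max := by
        apply Real.exp_le_exp.2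
        nlinarith [abs_nonneg (x - t)]
      nlinarith [(hpos t).le, Real.exp_pos (H_max * |x - t|)]
    apply one_div_le_one_div_of_le (pow_pos (hpos x) 3)
    exact pow_le_pow_left₀ (hpos x).le hax 3
  have hint : IntervalIntegrable (fun x => 1 / (a x) ^ 3) volume t (t+1) := by
    exact (continuous_const.div (hcont.pow 3)
      (fun x => (pow_pos (hpos x) 3).ne')).intervalIntegrable _ _
  have : c ≤ ∫ x in t..(t+1), 1 / (a x) ^ 3 := by
    have := intervalIntegral.integral_mono_on (by linarith : t ≤ t + 1)
      intervalIntegrable_const hint hbound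
    rwa [intervalIntegral.integral_const, show t + 1 - t = (1:ℝ) by ring, one_smul] at this
  linarith

/-- Theorem 5.1(b): in closed (`k = +1`) FRW with bounded `H`, if both `∫_ℝ a⁻³ < ∞` and
`∫_ℝ H²/a < ∞`, then `a → ∞` at both ends, `H/a → 0`, and the closed-branch
finite-interval ANEC integrals converge to the finite value `2 ∫_ℝ (a⁻³ − H²/a)`. -/
theorem closed_FRW_ANEC_finite
    (a H : ℝ → ℝ) (H_max : ℝ) (ha : ContDiff ℝ 2 a) (hpos : ∀ t, 0 < a t)
    (hH : ∀ t, H t = deriv a t / a t) (hHb : ∀ t, |H t| ≤ H_max)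
    (hint3 : Integrable (fun t => 1 / (a t) ^ 3))
    (hint : Integrable (fun t => (H t) ^ 2 / a t)) :
    Tendsto a atTop atTop ∧ Tendsto a atBot atTop ∧
    Tendsto (fun t => H t / a t) atTop (nhds 0) ∧
    Tendsto (fun t => H t / a t) atBot (nhds 0) ∧
    Tendsto (fun p : ℝ × ℝ =>
        ∫ t in p.1..p.2, (-2 * (deriv H t - 1 / (a t) ^ 2)) / a t)
      (atBot ×ˢ atTop)
      (nhds (2 * ∫ t : ℝ, (1 / (a t) ^ 3 - (H t) ^ 2 / a t))) := by
  have hane : ∀ t, a t ≠ 0 := fun t => (hpos t).ne'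
  have hacont : Continuous a := ha.continuous
  have hadiff : Differentiable ℝ a := ha.differentiable (by norm_num)
  have hHm : 0 ≤ H_max := le_trans (abs_nonneg _) (hHb 0)
  -- log-Lipschitz
  have hloglip : ∀ s t : ℝ, |Real.log (a s) - Real.log (a t)| ≤ H_max * |s - t| := by
    intro s t
    have hder : ∀ x : ℝ, HasDerivAt (fun u => Real.log (a u)) (H x) x := by
      intro x
      have := (hadiff x).hasDerivAt.log (hane x)
      rwa [← hH x] at this
    have := Convex.norm_image_sub_le_of_norm_deriv_le
      (f := fun u => Real.log (a u)) (C := H_max)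
      (fun x _ => (hder x).differentiableAt)
      (fun x _ => by rw [(hder x).deriv]; exact hHb x)
      convex_univ (Set.mem_univ t) (Set.mem_univ s)
    simpa [Real.norm_eq_abs] using this
  have hlip : ∀ s t : ℝ, a s ≤ a t * Real.exp (H_max * |s - t|) := by
    intro s t
    have h1 : Real.log (a s) - Real.log (a t) ≤ H_max * |s - t| :=
      le_trans (le_abs_self _) (hloglip s t)
    have h2 : a s = Real.exp (Real.log (a s)) := (Real.exp_log (hpos s)).symm
    rw [h2, show a t * Real.exp (H_max * |s - t|)
        = Real.exp (Real.log (a t) + H_max * |s - t|) by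
      rw [Real.exp_add, Real.exp_log (hpos t)]]
    exact Real.exp_le_exp.2 (by linarith)
  have hf3cont : Continuous (fun t => 1 / (a t) ^ 3) :=
    continuous_const.div (hacont.pow 3) (fun x => (pow_pos (hpos x) 3).ne')
  have hsmall := small_interval_tendsto hf3cont hint3
  have hatop : Tendsto a atTop atTop :=
    tendsto_a_atTop hpos hacont hHm hlip hsmall.1
  have habot : Tendsto a atBot atTop :=
    tendsto_a_atTop hpos hacont hHm hlip hsmall.2
  -- H/a → 0
  have hHa : ∀ {l : Filter ℝ}, Tendsto a l atTop →
      Tendsto (fun t => H t / a t) l (nhds 0) := by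
    intro l hl
    have hb : Tendsto (fun t => H_max / a t) l (nhds 0) :=
      Tendsto.div_atTop tendsto_const_nhds hl
    have hb' : Tendsto (fun t => -(H_max / a t)) l (nhds 0) := by
      simpa using hb.neg
    refine tendsto_of_tendsto_of_tendsto_of_le_of_le hb' hb (fun t => ?_) (fun t => ?_)
    · rw [← neg_div]
      exact (div_le_div_iff_of_pos_right (hpos t)).2 (abs_le.1 (hHb t)).1
    · exact (div_le_div_iff_of_pos_right (hpos t)).2 (abs_le.1 (hHb t)).2
  have hHatop := hHa hatop
  have hHabot := hHa habot
  refine ⟨hatop, habot, hHatop, hHabot, ?_⟩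
  -- smoothness of H
  have hHfun : H = fun t => deriv a t / a t := funext hH
  have hda : ContDiff ℝ 1 (deriv a) := by
    have h2 : ContDiff ℝ (1+1) a := by norm_num; exact ha
    exact (contDiff_succ_iff_deriv.mp h2).2.2
  have hHc1 : ContDiff ℝ 1 H := by
    rw [hHfun]; exact hda.div (ha.of_le (by norm_num)) hane
  have hHdiff : Differentiable ℝ H := hHc1.differentiable (by norm_num)
  have hdHcont : Continuous (deriv H) := hHc1.continuous_deriv le_rfl
  -- derivative of φ = H/a
  set φ : ℝ → ℝ := fun t => H t / a t with hφ
  set φ' : ℝ → ℝ := fun t => deriv H t / a t - (H t) ^ 2 / a t with hφ'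
  have hφder : ∀ t, HasDerivAt φ (φ' t) t := by
    intro t
    have h1 : HasDerivAt H (deriv H t) t := (hHdiff t).hasDerivAt
    have h2 : HasDerivAt a (deriv a t) t := (hadiff t).hasDerivAt
    have := h1.div h2 (hane t)
    refine this.congr_deriv ?_
    have hat := hane t
    simp only [hφ']
    rw [hH t]
    field_simp
  set g : ℝ → ℝ := fun t => 1 / (a t) ^ 3 - (H t) ^ 2 / a t with hg
  have hgint : Integrable g := hint3.sub hint
  have hgcont : Continuous g :=
    hf3cont.sub ((hHc1.continuous.pow 2).div hacont hane)
  have hφ'cont : Continuous φ' :=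
    (hdHcont.div hacont hane).sub ((hHc1.continuous.pow 2).div hacont hane)
  -- pointwise identity for the integrand
  have hident : ∀ t, (-2 * (deriv H t - 1 / (a t) ^ 2)) / a t
      = -2 * φ' t + 2 * g t := by
    intro t
    have hat := hane t
    simp only [hφ', hg]
    field_simp
    ring
  -- rewrite the interval integral
  have hkey : ∀ p : ℝ × ℝ,
      (∫ t in p.1..p.2, (-2 * (deriv H t - 1 / (a t) ^ 2)) / a t)
      = -2 * (φ p.2 - φ p.1) + 2 * ∫ t in p.1..p.2, g t := by
    intro p
    have hIφ' : IntervalIntegrable φ' volume p.1 p.2 := hφ'cont.intervalIntegrable _ _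
    have hIg : IntervalIntegrable g volume p.1 p.2 := hgcont.intervalIntegrable _ _
    have hftc : (∫ t in p.1..p.2, φ' t) = φ p.2 - φ p.1 :=
      intervalIntegral.integral_eq_sub_of_hasDerivAt (fun x _ => hφder x) hIφ'
    calc (∫ t in p.1..p.2, (-2 * (deriv H t - 1 / (a t) ^ 2)) / a t)
        = ∫ t in p.1..p.2, (-2 * φ' t + 2 * g t) := by
          exact intervalIntegral.integral_congr (fun t _ => hident t)
      _ = (∫ t in p.1..p.2, -2 * φ' t) + ∫ t in p.1..p.2, 2 * g t :=
          intervalIntegral.integral_add (hIφ'.const_mul _) (hIg.const_mul _)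
      _ = -2 * (φ p.2 - φ p.1) + 2 * ∫ t in p.1..p.2, g t := by
          rw [intervalIntegral.integral_const_mul, intervalIntegral.integral_const_mul, hftc]
  have T1 : Tendsto (fun p : ℝ × ℝ => φ p.2) (atBot ×ˢ atTop) (nhds 0) :=
    hHatop.comp tendsto_snd
  have T2 : Tendsto (fun p : ℝ × ℝ => φ p.1) (atBot ×ˢ atTop) (nhds 0) :=
    hHabot.comp tendsto_fst
  have T3 : Tendsto (fun p : ℝ × ℝ => ∫ t in p.1..p.2, g t) (atBot ×ˢ atTop)
      (nhds (∫ t : ℝ, g t)) :=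
    intervalIntegral_tendsto_integral hgint tendsto_fst tendsto_snd
  have Tall := (((T1.sub T2).const_mul (-2 : ℝ)).add (T3.const_mul 2))
  simp only [sub_zero, sub_self, mul_zero] at Tall
  rw [zero_add] at Tall
  refine Tendsto.congr (fun p => (hkey p).symm) Tall
end

section
/- Let a : [t₀, ∞) → ℝ be continuously differentiable with a(t) > 0, and suppose |a'(t)/a(t)| ≤ H_max for all t ≥ t₀ and that a^{−3} is integrable on [t₀, ∞) (∫_{t₀}^∞ a(t)^{−3} dt < ∞). Then a(t) → +∞ as t → +∞. -/
open Filter MeasureTheory Topology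

/-- Lemma B.2 (integrability with bounded logarithmic derivative implies a divergent
tail): if `a > 0` is `C¹` on `[t₀, ∞)`, `|a'/a| ≤ H_max` there, and `a⁻³` is integrable
on `[t₀, ∞)`, then `a(t) → +∞` as `t → +∞`. -/
theorem tail_divergence_of_integrable_inverse_cube
    (a : ℝ → ℝ) (t₀ H_max : ℝ)
    (ha : ContDiffOn ℝ 1 a (Set.Ici t₀))
    (hpos : ∀ t, t₀ ≤ t → 0 < a t)
    (hHb : ∀ t, t₀ ≤ t → |derivWithin a (Set.Ici t₀) t / a t| ≤ H_max)
    (hint : IntegrableOn (fun t => 1 / (a t) ^ 3) (Set.Ici t₀)) :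
    Tendsto a atTop atTop := by
  set f : ℝ → ℝ := fun t => 1 / (a t) ^ 3 with hf
  -- log a is Lipschitz with constant H_max on [t₀, ∞)
  have hdiff : DifferentiableOn ℝ a (Set.Ici t₀) := ha.differentiableOn one_ne_zero
  have hlog : ∀ x ∈ Set.Ici t₀, HasDerivWithinAt (fun t => Real.log (a t))
      (derivWithin a (Set.Ici t₀) x / a x) (Set.Ici t₀) x := by
    intro x hx
    have h1 : HasDerivWithinAt a (derivWithin a (Set.Ici t₀) x) (Set.Ici t₀) x :=
      (hdiff x hx).hasDerivWithinAt
    have := (Real.hasDerivAt_log (hpos x hx).ne').comp_hasDerivWithinAt x h1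
    simpa [div_eq_inv_mul, Function.comp_def] using this
  have hlip : ∀ s t, t₀ ≤ t → t ≤ s →
      Real.log (a s) - Real.log (a t) ≤ H_max * (s - t) := by
    intro s t ht hts
    have hs : t₀ ≤ s := ht.trans hts
    have key := (convex_Ici t₀).norm_image_sub_le_of_norm_hasDerivWithin_le
      hlog (fun x hx => by simpa only [Real.norm_eq_abs] using hHb x hx) (Set.mem_Ici.2 ht) (Set.mem_Ici.2 hs)
    have : |Real.log (a s) - Real.log (a t)| ≤ H_max * |s - t| := by
      simpa [Real.norm_eq_abs] using key
    calc Real.log (a s) - Real.log (a t) ≤ |Real.log (a s) - Real.log (a t)| := le_abs_self _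
      _ ≤ H_max * |s - t| := this
      _ = H_max * (s - t) := by rw [abs_of_nonneg (by linarith)]
  -- comparison: a s ≤ a t * exp H_max for s ∈ [t, t+1]
  have hH0 : 0 ≤ H_max := le_trans (abs_nonneg _) (hHb t₀ le_rfl)
  have hcomp : ∀ t, t₀ ≤ t → ∀ s ∈ Set.Ioc t (t + 1),
      Real.exp (-(3 * H_max)) * (1 / (a t) ^ 3) ≤ f s := by
    intro t ht s hs
    have hts : t ≤ s := le_of_lt hs.1
    have hs0 : t₀ ≤ s := ht.trans hts
    have hlb : a s ≤ a t * Real.exp H_max := by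
      have h1 : Real.log (a s) - Real.log (a t) ≤ H_max * (s - t) := hlip s t ht hts
      have h2 : H_max * (s - t) ≤ H_max := by nlinarith [hs.2, hs.1]
      have h3 : Real.log (a s) ≤ Real.log (a t) + H_max := by linarith
      calc a s = Real.exp (Real.log (a s)) := (Real.exp_log (hpos s hs0)).symm
        _ ≤ Real.exp (Real.log (a t) + H_max) := Real.exp_le_exp.2 h3
        _ = a t * Real.exp H_max := by rw [Real.exp_add, Real.exp_log (hpos t ht)]
    have hat : 0 < a t := hpos t ht
    have has : 0 < a s := hpos s hs0
    have hcube : (a s) ^ 3 ≤ (a t) ^ 3 * Real.exp (3 * H_max) := by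
      have := pow_le_pow_left₀ has.le hlb 3
      calc (a s) ^ 3 ≤ (a t * Real.exp H_max) ^ 3 := this
        _ = (a t) ^ 3 * Real.exp (3 * H_max) := by
            rw [mul_pow, ← Real.exp_nat_mul]; norm_num
    rw [hf]
    have h2 : (0:ℝ) < (a s) ^ 3 := by positivity
    have heq : Real.exp (-(3 * H_max)) * (1 / (a t) ^ 3)
        = 1 / ((a t) ^ 3 * Real.exp (3 * H_max)) := by
      rw [Real.exp_neg]; field_simp
    rw [heq]
    exact one_div_le_one_div_of_le h2 hcube
  -- the tail integral over (t, t+1] tends to 0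
  have hIoi : IntegrableOn f (Set.Ioi t₀) := hint.mono_set Set.Ioi_subset_Ici_self
  have htend : Tendsto (fun t => ∫ s in t₀..t, f s) atTop (𝓝 (∫ s in Set.Ioi t₀, f s)) :=
    intervalIntegral_tendsto_integral_Ioi t₀ hIoi tendsto_id
  have htend1 : Tendsto (fun t => ∫ s in t₀..(t + 1), f s) atTop (𝓝 (∫ s in Set.Ioi t₀, f s)) :=
    htend.comp (tendsto_atTop_add_const_right _ 1 tendsto_id)
  have hG : Tendsto (fun t => ∫ s in Set.Ioc t (t + 1), f s) atTop (𝓝 0) := by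
    have heq : (fun t => ∫ s in Set.Ioc t (t + 1), f s)
        =ᶠ[atTop] (fun t => (∫ s in t₀..(t + 1), f s) - (∫ s in t₀..t, f s)) := by
      filter_upwards [eventually_ge_atTop t₀] with t ht
      have h1 : IntegrableOn f (Set.Ioc t₀ (t + 1)) :=
        hIoi.mono_set (Set.Ioc_subset_Ioi_self)
      have hsum : (∫ s in Set.Ioc t₀ (t + 1), f s)
          = (∫ s in Set.Ioc t₀ t, f s) + (∫ s in Set.Ioc t (t + 1), f s) := by
        rw [← setIntegral_union (Set.Ioc_disjoint_Ioc_of_le le_rfl) measurableSet_Ioc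
          (h1.mono_set (Set.Ioc_subset_Ioc_right (by linarith)))
          (h1.mono_set (Set.Ioc_subset_Ioc_left ht)),
          Set.Ioc_union_Ioc_eq_Ioc ht (by linarith)]
      rw [intervalIntegral.integral_of_le (by linarith : t₀ ≤ t + 1),
        intervalIntegral.integral_of_le ht]
      linarith
    have := htend1.sub htend
    rw [sub_self] at this
    exact Tendsto.congr' heq.symm this
  -- squeeze
  have hsq : Tendsto (fun t => Real.exp (-(3 * H_max)) * (1 / (a t) ^ 3)) atTop (𝓝 0) := by
    apply tendsto_of_tendsto_of_tendsto_of_le_of_le' tendsto_const_nhds hG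
    · filter_upwards [eventually_ge_atTop t₀] with t ht
      have := hpos t ht
      positivity
    · filter_upwards [eventually_ge_atTop t₀] with t ht
      have hmeas : MeasurableSet (Set.Ioc t (t + 1)) := measurableSet_Ioc
      have hintloc : IntegrableOn f (Set.Ioc t (t + 1)) :=
        hint.mono_set (fun x hx => le_trans ht (le_of_lt hx.1))
      calc Real.exp (-(3 * H_max)) * (1 / (a t) ^ 3)
          = ∫ _ in Set.Ioc t (t + 1), Real.exp (-(3 * H_max)) * (1 / (a t) ^ 3) := by
            rw [setIntegral_const, Real.volume_real_Ioc]
            simp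
        _ ≤ ∫ s in Set.Ioc t (t + 1), f s := by
            apply setIntegral_mono_on (integrableOn_const (by
              rw [Real.volume_Ioc]; exact ENNReal.ofReal_ne_top)) hintloc hmeas
            exact fun s hs => hcomp t ht s hs
  have hcube0 : Tendsto (fun t => 1 / (a t) ^ 3) atTop (𝓝 0) := by
    have := hsq.const_mul (Real.exp (-(3 * H_max)))⁻¹
    simp only [mul_zero] at this
    refine this.congr fun t => ?_
    rw [← mul_assoc, inv_mul_cancel₀ (Real.exp_ne_zero _), one_mul]
  -- conclude a → ∞
  have hcubeTop : Tendsto (fun t => (a t) ^ 3) atTop atTop := by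
    have h1 : Tendsto (fun t => 1 / (a t) ^ 3) atTop (𝓝[>] 0) := by
      apply tendsto_nhdsWithin_of_tendsto_nhds_of_eventually_within _ hcube0
      filter_upwards [eventually_ge_atTop t₀] with t ht
      have := hpos t ht
      exact Set.mem_Ioi.2 (by positivity)
    have := h1.inv_tendsto_nhdsGT_zero
    refine this.congr fun t => ?_
    simp
  rw [tendsto_atTop] at hcubeTop ⊢
  intro C
  filter_upwards [hcubeTop ((max C 1) ^ 3), eventually_ge_atTop t₀] with t h1 h2
  by_contra hlt
  push_neg at hlt
  have hm1 : (1:ℝ) ≤ max C 1 := le_max_right _ _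
  have hCle : C ≤ max C 1 := le_max_left _ _
  have : (a t) ^ 3 < (max C 1) ^ 3 :=
    pow_lt_pow_left₀ (by linarith) (hpos t h2).le (by norm_num)
  linarith
end

section
/- Let a : ℝ → ℝ be twice continuously differentiable with a(t) ≥ a_min > 0 for all t, let H(t) = a'(t)/a(t) satisfy |H(t)| ≤ H_max for all t, and suppose 1/a is integrable on ℝ (∫_ℝ a(t)^{−1} dt < ∞). Then: ∫_ℝ H(t)²/a(t) dt < ∞; ∫_ℝ a(t)^{−3} dt < ∞; a(t) → +∞ as t → ±∞, hence H(t)/a(t) → 0 as t → ±∞; and the closed-FRW ANEC integrals I(T₋,T₊) = ∫_{T₋}^{T₊} (−2·(H'(t) − 1/a(t)²))/a(t) dt converge to a finite limit as T₋ → −∞ and T₊ → +∞. -/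
open Filter MeasureTheory

/-- Corollary on integrable inverse-scale tails (Appendix B): with bounded `H`, `a`
bounded below by `a_min > 0`, and `∫_ℝ 1/a < ∞`, one gets `∫_ℝ H²/a < ∞`,
`∫_ℝ a⁻³ < ∞`, `a → ∞` and `H/a → 0` at both ends, and the closed-FRW ANEC integrals
converge to a finite limit. -/
theorem closed_FRW_ANEC_finite_of_integrable_inverse_scale
    (a H : ℝ → ℝ) (a_min H_max : ℝ) (ha : ContDiff ℝ 2 a)
    (hmin : 0 < a_min) (hamin : ∀ t, a_min ≤ a t)
    (hH : ∀ t, H t = deriv a t / a t) (hHb : ∀ t, |H t| ≤ H_max)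
    (hint1 : Integrable (fun t => 1 / a t)) :
    Integrable (fun t => (H t) ^ 2 / a t) ∧
    Integrable (fun t => 1 / (a t) ^ 3) ∧
    Tendsto a atTop atTop ∧ Tendsto a atBot atTop ∧
    Tendsto (fun t => H t / a t) atTop (nhds 0) ∧
    Tendsto (fun t => H t / a t) atBot (nhds 0) ∧
    ∃ l : ℝ, Tendsto (fun p : ℝ × ℝ =>
        ∫ t in p.1..p.2, (-2 * (deriv H t - 1 / (a t) ^ 2)) / a t)
      (atBot ×ˢ atTop) (nhds l) := by
  have hapos : ∀ t, 0 < a t := fun t => lt_of_lt_of_le hmin (hamin t)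
  have hane : ∀ t, a t ≠ 0 := fun t => (hapos t).ne'
  have haC : Continuous a := ha.continuous
  have hH0 : 0 ≤ H_max := le_trans (abs_nonneg _) (hHb 0)
  have ha1 : ContDiff ℝ 1 a := ha.of_le one_le_two
  have hda : ContDiff ℝ 1 (deriv a) := by
    have h2 : ContDiff ℝ (1 + 1 : ℕ) a := by exact_mod_cast ha
    exact (contDiff_succ_iff_deriv.mp h2).2.2
  have hHC1 : ContDiff ℝ 1 H := by
    have hfun : H = fun t => deriv a t / a t := funext hH
    rw [hfun]; exact hda.div ha1 hane
  have hHcont : Continuous H := hHC1.continuous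
  have hHdiff : Differentiable ℝ H := hHC1.differentiable one_ne_zero
  have hdHcont : Continuous (deriv H) := hHC1.continuous_deriv le_rfl
  have hinv_cont : Continuous (fun t => 1 / a t) := continuous_const.div haC hane
  -- Integrability of H²/a
  have hint_sq : Integrable (fun t => (H t) ^ 2 / a t) := by
    refine (hint1.const_mul (H_max ^ 2)).mono' ?_ ?_
    · exact (((hHcont.pow 2).div haC hane)).aestronglyMeasurable
    · filter_upwards with t
      have h1 : 0 < a t := hapos t
      have h2 : H t ^ 2 ≤ H_max ^ 2 := by
        have := pow_le_pow_left₀ (abs_nonneg (H t)) (hHb t) 2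
        rwa [sq_abs] at this
      rw [Real.norm_eq_abs, abs_of_nonneg (by positivity), mul_one_div]
      gcongr
  -- Integrability of 1/a³
  have hint3 : Integrable (fun t => 1 / (a t) ^ 3) := by
    refine (hint1.const_mul (1 / a_min ^ 2)).mono' ?_ ?_
    · exact (continuous_const.div (haC.pow 3) fun t => pow_ne_zero 3 (hane t)).aestronglyMeasurable
    · filter_upwards with t
      have h1 : 0 < a t := hapos t
      rw [Real.norm_eq_abs, abs_of_nonneg (by positivity)]
      have h2 : a_min ^ 2 * a t ≤ (a t) ^ 3 := by nlinarith [pow_le_pow_left₀ hmin.le (hamin t) 2, hapos t]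
      calc 1 / (a t) ^ 3 ≤ 1 / (a_min ^ 2 * a t) :=
            one_div_le_one_div_of_le (by positivity) h2
        _ = 1 / a_min ^ 2 * (1 / a t) := by field_simp
  -- Lipschitz bound on log ∘ a
  have hlog : ∀ t, HasDerivAt (fun s => Real.log (a s)) (H t) t := by
    intro t
    have h1 : HasDerivAt a (deriv a t) t := (ha1.differentiable one_ne_zero t).hasDerivAt
    have := h1.log (hane t)
    rw [hH t]; exact this
  have lip : ∀ s t : ℝ, |Real.log (a s) - Real.log (a t)| ≤ H_max * |s - t| := by
    intro s t
    have := convex_univ.norm_image_sub_le_of_norm_hasDerivWithin_le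
      (f := fun s => Real.log (a s)) (f' := H)
      (fun x _ => (hlog x).hasDerivWithinAt) (fun x _ => by simpa using hHb x)
      (Set.mem_univ t) (Set.mem_univ s)
    simpa [Real.norm_eq_abs] using this
  have expub : ∀ s t : ℝ, |s - t| ≤ 1 → a s ≤ a t * Real.exp H_max := by
    intro s t hst
    have h2 := (abs_le.mp (lip s t)).2
    have h3 : H_max * |s - t| ≤ H_max * 1 := mul_le_mul_of_nonneg_left hst hH0
    have h1 : Real.log (a s) ≤ Real.log (a t) + H_max := by linarith
    calc a s = Real.exp (Real.log (a s)) := (Real.exp_log (hapos s)).symm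
      _ ≤ Real.exp (Real.log (a t) + H_max) := Real.exp_le_exp.mpr h1
      _ = a t * Real.exp H_max := by rw [Real.exp_add, Real.exp_log (hapos t)]
  -- lower bound for window integrals
  have hJlb : ∀ t : ℝ, Real.exp (-H_max) * (1 / a t) ≤ ∫ s in t..(t + 1), 1 / a s := by
    intro t
    have hc : ∀ s ∈ Set.Icc t (t + 1), Real.exp (-H_max) * (1 / a t) ≤ 1 / a s := by
      intro s hs
      have h2 : a s ≤ a t * Real.exp H_max := by
        refine expub s t ?_
        rw [abs_le]; exact ⟨by linarith [hs.1], by linarith [hs.2]⟩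
      have key : (1 : ℝ) / (a t * Real.exp H_max) ≤ 1 / a s :=
        one_div_le_one_div_of_le (hapos s) h2
      calc Real.exp (-H_max) * (1 / a t) = 1 / (a t * Real.exp H_max) := by
            rw [Real.exp_neg]; field_simp
        _ ≤ 1 / a s := key
    have hmono := intervalIntegral.integral_mono_on (μ := volume) (by linarith : t ≤ t + 1)
      (intervalIntegrable_const) (hinv_cont.intervalIntegrable t (t + 1)) hc
    simpa using hmono
  -- window integrals tend to zero at both ends
  have hJsub : ∀ t : ℝ, (∫ s in (0 : ℝ)..(t + 1), 1 / a s) - ∫ s in (0 : ℝ)..t, 1 / a s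
      = ∫ s in t..(t + 1), 1 / a s := fun t =>
    intervalIntegral.integral_interval_sub_left
      (hinv_cont.intervalIntegrable 0 (t + 1)) (hinv_cont.intervalIntegrable 0 t)
  have hJtop : Tendsto (fun t => ∫ s in t..(t + 1), 1 / a s) atTop (nhds 0) := by
    have hΦ : Tendsto (fun T : ℝ => ∫ s in (0 : ℝ)..T, 1 / a s) atTop
        (nhds (∫ s in Set.Ioi 0, 1 / a s)) :=
      intervalIntegral_tendsto_integral_Ioi 0 hint1.integrableOn tendsto_id
    have h1 := (hΦ.comp (tendsto_atTop_add_const_right atTop 1 tendsto_id)).sub hΦ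
    rw [sub_self] at h1
    exact h1.congr hJsub
  have hJbot : Tendsto (fun t => ∫ s in t..(t + 1), 1 / a s) atBot (nhds 0) := by
    have hΨ : Tendsto (fun T : ℝ => ∫ s in T..(0 : ℝ), 1 / a s) atBot
        (nhds (∫ s in Set.Iic 0, 1 / a s)) :=
      intervalIntegral_tendsto_integral_Iic 0 hint1.integrableOn tendsto_id
    have hΦ : Tendsto (fun T : ℝ => ∫ s in (0 : ℝ)..T, 1 / a s) atBot
        (nhds (-∫ s in Set.Iic 0, 1 / a s)) := by
      have := hΨ.neg
      refine this.congr fun T => ?_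
      rw [intervalIntegral.integral_symm, neg_neg]
    have h1 := (hΦ.comp (tendsto_atBot_add_const_right atBot 1 tendsto_id)).sub hΦ
    rw [sub_self] at h1
    exact h1.congr hJsub
  -- 1/a → 0 at both ends
  have hub : ∀ t, 1 / a t ≤ Real.exp H_max * ∫ s in t..(t + 1), 1 / a s := by
    intro t
    have h1 := mul_le_mul_of_nonneg_left (hJlb t) (Real.exp_pos H_max).le
    calc 1 / a t = Real.exp H_max * (Real.exp (-H_max) * (1 / a t)) := by
          rw [← mul_assoc, ← Real.exp_add]; simp
      _ ≤ _ := h1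
  have hinvtop : Tendsto (fun t => 1 / a t) atTop (nhds 0) := by
    refine squeeze_zero (fun t => (div_pos one_pos (hapos t)).le) hub ?_
    simpa using hJtop.const_mul (Real.exp H_max)
  have hinvbot : Tendsto (fun t => 1 / a t) atBot (nhds 0) := by
    refine squeeze_zero (fun t => (div_pos one_pos (hapos t)).le) hub ?_
    simpa using hJbot.const_mul (Real.exp H_max)
  have hatop : Tendsto a atTop atTop := by
    have h1 : Tendsto (fun t => 1 / a t) atTop (nhdsWithin 0 (Set.Ioi 0)) :=
      tendsto_nhdsWithin_of_tendsto_nhds_of_eventually_within _ hinvtop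
        (Eventually.of_forall fun t => Set.mem_Ioi.mpr (div_pos one_pos (hapos t)))
    have h2 := h1.inv_tendsto_nhdsGT_zero
    refine h2.congr fun t => ?_
    simp [one_div]
  have habot : Tendsto a atBot atTop := by
    have h1 : Tendsto (fun t => 1 / a t) atBot (nhdsWithin 0 (Set.Ioi 0)) :=
      tendsto_nhdsWithin_of_tendsto_nhds_of_eventually_within _ hinvbot
        (Eventually.of_forall fun t => Set.mem_Ioi.mpr (div_pos one_pos (hapos t)))
    have h2 := h1.inv_tendsto_nhdsGT_zero
    refine h2.congr fun t => ?_
    simp [one_div]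
  -- H/a → 0 at both ends
  have hHa_bound : ∀ t, ‖H t / a t‖ ≤ H_max * (1 / a t) := by
    intro t
    have h1 := hapos t
    rw [Real.norm_eq_abs, abs_div, abs_of_pos h1, mul_one_div]
    gcongr
    exact hHb t
  have hHatop : Tendsto (fun t => H t / a t) atTop (nhds 0) := by
    refine squeeze_zero_norm hHa_bound ?_
    simpa using hinvtop.const_mul H_max
  have hHabot : Tendsto (fun t => H t / a t) atBot (nhds 0) := by
    refine squeeze_zero_norm hHa_bound ?_
    simpa using hinvbot.const_mul H_max
  -- derivative of H/a
  have hgd : ∀ t, HasDerivAt (fun s => H s / a s) (deriv H t / a t - H t ^ 2 / a t) t := by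
    intro t
    have h1 : HasDerivAt H (deriv H t) t := (hHdiff t).hasDerivAt
    have h2 : HasDerivAt a (deriv a t) t := (ha1.differentiable one_ne_zero t).hasDerivAt
    have h3 := h1.div h2 (hane t)
    have heq : deriv H t / a t - H t ^ 2 / a t
        = (deriv H t * a t - H t * deriv a t) / a t ^ 2 := by
      rw [hH t]
      have h0 := hane t
      field_simp
    rw [heq]
    exact h3
  -- the ANEC integrand decomposition
  have hderivcont : Continuous (fun t => deriv H t / a t - H t ^ 2 / a t) :=
    (hdHcont.div haC hane).sub ((hHcont.pow 2).div haC hane)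
  have hφcont : Continuous (fun t => -2 * H t ^ 2 / a t + 2 / (a t) ^ 3) := by
    refine ((continuous_const.mul (hHcont.pow 2)).div haC hane).add
      (continuous_const.div (haC.pow 3) fun t => pow_ne_zero 3 (hane t))
  have hφint : Integrable (fun t => -2 * H t ^ 2 / a t + 2 / (a t) ^ 3) := by
    have h1 := (hint_sq.const_mul (-2)).add (hint3.const_mul 2)
    have h2 : (fun t => -2 * H t ^ 2 / a t + 2 / (a t) ^ 3)
        = fun t => (-2) * (H t ^ 2 / a t) + 2 * (1 / (a t) ^ 3) := by
      funext t; ring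
    rw [h2]; exact h1
  have key : ∀ p : ℝ × ℝ, (∫ t in p.1..p.2, (-2 * (deriv H t - 1 / (a t) ^ 2)) / a t)
      = (-2) * (H p.2 / a p.2 - H p.1 / a p.1)
        + ∫ t in p.1..p.2, (-2 * H t ^ 2 / a t + 2 / (a t) ^ 3) := by
    intro p
    have hFTC : ∫ t in p.1..p.2, (deriv H t / a t - H t ^ 2 / a t)
        = H p.2 / a p.2 - H p.1 / a p.1 :=
      intervalIntegral.integral_eq_sub_of_hasDerivAt (fun x _ => hgd x)
        (hderivcont.intervalIntegrable _ _)
    have split : ∀ t, (-2 * (deriv H t - 1 / (a t) ^ 2)) / a t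
        = (-2) * (deriv H t / a t - H t ^ 2 / a t)
          + (-2 * H t ^ 2 / a t + 2 / (a t) ^ 3) := by
      intro t
      have h1 := hane t
      field_simp
      ring
    calc (∫ t in p.1..p.2, (-2 * (deriv H t - 1 / (a t) ^ 2)) / a t)
        = ∫ t in p.1..p.2, ((-2) * (deriv H t / a t - H t ^ 2 / a t)
            + (-2 * H t ^ 2 / a t + 2 / (a t) ^ 3)) := by
          exact intervalIntegral.integral_congr fun t _ => split t
      _ = (∫ t in p.1..p.2, (-2) * (deriv H t / a t - H t ^ 2 / a t))
            + ∫ t in p.1..p.2, (-2 * H t ^ 2 / a t + 2 / (a t) ^ 3) := by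
          exact intervalIntegral.integral_add
            ((continuous_const.mul hderivcont).intervalIntegrable _ _)
            (hφcont.intervalIntegrable _ _)
      _ = (-2) * (H p.2 / a p.2 - H p.1 / a p.1)
            + ∫ t in p.1..p.2, (-2 * H t ^ 2 / a t + 2 / (a t) ^ 3) := by
          rw [intervalIntegral.integral_const_mul, hFTC]
  refine ⟨hint_sq, hint3, hatop, habot, hHatop, hHabot,
    ⟨∫ t, (-2 * H t ^ 2 / a t + 2 / (a t) ^ 3), ?_⟩⟩
  have h1 : Tendsto (fun p : ℝ × ℝ => (-2 : ℝ) * (H p.2 / a p.2 - H p.1 / a p.1))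
      (atBot ×ˢ atTop) (nhds 0) := by
    have hg2 : Tendsto (fun p : ℝ × ℝ => H p.2 / a p.2) (atBot ×ˢ atTop) (nhds 0) :=
      hHatop.comp tendsto_snd
    have hg1 : Tendsto (fun p : ℝ × ℝ => H p.1 / a p.1) (atBot ×ˢ atTop) (nhds 0) :=
      hHabot.comp tendsto_fst
    simpa using (hg2.sub hg1).const_mul (-2 : ℝ)
  have h2 : Tendsto (fun p : ℝ × ℝ => ∫ t in p.1..p.2, (-2 * H t ^ 2 / a t + 2 / (a t) ^ 3))
      (atBot ×ˢ atTop) (nhds (∫ t, (-2 * H t ^ 2 / a t + 2 / (a t) ^ 3))) :=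
    intervalIntegral_tendsto_integral hφint tendsto_fst tendsto_snd
  have h3 := h1.add h2
  rw [zero_add] at h3
  exact h3.congr fun p => (key p).symm
end

section
/- Let a : ℝ → ℝ be twice continuously differentiable with a(t) > 0 for all t and with H(t) = a'(t)/a(t) not identically zero. Suppose H(t)/a(t) tends to finite limits as t → +∞ and as t → −∞, and that ∫_{0}^{T} a(t) dt → +∞ and ∫_{−T}^{0} a(t) dt → +∞ as T → +∞ (null completeness in both directions). Define the open-FRW finite-interval ANEC integral I(T₋,T₊) = ∫_{T₋}^{T₊} (−2·(H'(t) + 1/a(t)²))/a(t) dt. Then I(T₋,T₊) converges, as T₋ → −∞ and T₊ → +∞, to a limit l in the extended reals with l < 0; specifically, either l = −∞, or ∫_ℝ (H²/a + a^{−3}) dt < ∞, both endpoint limits of H/a are zero, and l = −2·∫_ℝ (H(t)²/a(t) + a(t)^{−3}) dt < 0. -/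
open Filter MeasureTheory

/-- Open FRW obstruction (Appendix C): a non-static, null-complete open (`k = −1`) FRW
spacetime with regular affine ends has affine ANEC limit `l < 0` in the extended reals:
either `l = −∞`, or `∫_ℝ (H²/a + a⁻³) < ∞`, both endpoint limits of `H/a` vanish, and
`l = −2 ∫_ℝ (H²/a + a⁻³) < 0`. -/
theorem open_null_complete_ANEC_negative
    (a H : ℝ → ℝ) (ha : ContDiff ℝ 2 a) (hpos : ∀ t, 0 < a t)
    (hH : ∀ t, H t = deriv a t / a t)
    (hns : ∃ t, H t ≠ 0)
    (hlimp : ∃ Lp : ℝ, Tendsto (fun t => H t / a t) atTop (nhds Lp))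
    (hlimm : ∃ Lm : ℝ, Tendsto (fun t => H t / a t) atBot (nhds Lm))
    (hfut : Tendsto (fun T => ∫ t in (0:ℝ)..T, a t) atTop atTop)
    (hpast : Tendsto (fun T => ∫ t in (-T)..(0:ℝ), a t) atTop atTop) :
    ∃ l : EReal,
      Tendsto (fun p : ℝ × ℝ =>
          ((∫ t in p.1..p.2, (-2 * (deriv H t + 1 / (a t) ^ 2)) / a t : ℝ) : EReal))
        (atBot ×ˢ atTop) (nhds l) ∧
      l < 0 ∧
      (l = ⊥ ∨
        (Integrable (fun t => (H t) ^ 2 / a t + 1 / (a t) ^ 3) ∧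
          Tendsto (fun t => H t / a t) atTop (nhds 0) ∧
          Tendsto (fun t => H t / a t) atBot (nhds 0) ∧
          l = ((-2 * ∫ t : ℝ, ((H t) ^ 2 / a t + 1 / (a t) ^ 3) : ℝ) : EReal) ∧
          (-2 * ∫ t : ℝ, ((H t) ^ 2 / a t + 1 / (a t) ^ 3) : ℝ) < 0)) := by
  clear hns
  obtain ⟨Lp, hLp⟩ := hlimp
  obtain ⟨Lm, hLm⟩ := hlimm
  set g : ℝ → ℝ := fun t => H t / a t with hgdef
  set φ : ℝ → ℝ := fun t => (H t) ^ 2 / a t + 1 / (a t) ^ 3 with hφdef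
  have hane : ∀ t, a t ≠ 0 := fun t => (hpos t).ne'
  have ha1 : ContDiff ℝ 1 a := ha.of_le (by norm_num)
  have haC : Continuous a := ha1.continuous
  have hda : ContDiff ℝ 1 (deriv a) := by
    have h2 : ContDiff ℝ (1 + 1) a := by norm_num; exact ha
    exact (contDiff_succ_iff_deriv.mp h2).2.2
  have hHeq : H = fun t => deriv a t / a t := funext hH
  have hHC1 : ContDiff ℝ 1 H := by rw [hHeq]; exact hda.div ha1 hane
  have hHc : Continuous H := hHC1.continuous
  have hHd : Differentiable ℝ H := hHC1.differentiable one_ne_zero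
  have hH'c : Continuous (deriv H) := hHC1.continuous_deriv le_rfl
  have hda' : ∀ t, deriv a t = H t * a t := by
    intro t; rw [hH t, div_mul_cancel₀ _ (hane t)]
  have hgc : Continuous g := hHc.div haC hane
  have hφc : Continuous φ :=
    ((hHc.pow 2).div haC hane).add
      (continuous_const.div (haC.pow 3) (fun t => pow_ne_zero _ (hane t)))
  have hφpos : ∀ t, 0 < φ t := fun t =>
    add_pos_of_nonneg_of_pos (div_nonneg (sq_nonneg _) (hpos t).le)
      (one_div_pos.mpr (pow_pos (hpos t) 3))
  have hψc : Continuous (fun t => (H t) ^ 2 / a t) := (hHc.pow 2).div haC hane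
  have hψg : ∀ t, (H t) ^ 2 / a t = (g t) ^ 2 * a t := by
    intro t
    show (H t) ^ 2 / a t = (H t / a t) ^ 2 * a t
    rw [div_pow, div_mul_eq_mul_div, div_eq_div_iff (hane t) (pow_ne_zero 2 (hane t))]
    ring
  -- derivative of g
  set G : ℝ → ℝ := fun t => deriv H t / a t - (H t) ^ 2 / a t with hGdef
  have hGc : Continuous G := (hH'c.div haC hane).sub hψc
  have hg' : ∀ t, HasDerivAt g (G t) t := by
    intro t
    have h := ((hHd t).hasDerivAt).div ((ha1.differentiable one_ne_zero t).hasDerivAt) (hane t)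
    refine h.congr_deriv (Eq.symm ?_)
    rw [hda' t]
    show deriv H t / a t - H t ^ 2 / a t = (deriv H t * a t - H t * (H t * a t)) / a t ^ 2
    rw [div_sub_div _ _ (hane t) (hane t),
      div_eq_div_iff (mul_ne_zero (hane t) (hane t)) (pow_ne_zero 2 (hane t))]
    ring
  -- interval identity
  have key : ∀ x y : ℝ,
      (∫ t in x..y, (-2 * (deriv H t + 1 / (a t) ^ 2)) / a t)
        = -2 * (g y - g x) - 2 * ∫ t in x..y, φ t := by
    intro x y
    have hfun : ∀ t, (-2 * (deriv H t + 1 / (a t) ^ 2)) / a t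
        = -2 * G t + -2 * φ t := by
      intro t
      have := hane t
      show (-2 * (deriv H t + 1 / (a t) ^ 2)) / a t
          = -2 * (deriv H t / a t - (H t) ^ 2 / a t)
            + -2 * ((H t) ^ 2 / a t + 1 / (a t) ^ 3)
      field_simp
      ring
    rw [intervalIntegral.integral_congr (fun t _ => hfun t)]
    rw [intervalIntegral.integral_add ((hGc.intervalIntegrable x y).const_mul _)
      ((hφc.intervalIntegrable x y).const_mul _),
      intervalIntegral.integral_const_mul, intervalIntegral.integral_const_mul,
      intervalIntegral.integral_eq_sub_of_hasDerivAt (fun t _ => hg' t)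
        (hGc.intervalIntegrable x y)]
    ring
  -- a is not improperly integrable toward either end
  have hnotIoi : ¬ IntegrableOn a (Set.Ioi (0:ℝ)) := by
    intro hcon
    exact not_tendsto_atTop_of_tendsto_nhds
      (intervalIntegral_tendsto_integral_Ioi 0 hcon tendsto_id) hfut
  have hnotIic : ¬ IntegrableOn a (Set.Iic (0:ℝ)) := by
    intro hcon
    exact not_tendsto_atTop_of_tendsto_nhds
      (intervalIntegral_tendsto_integral_Iic 0 hcon tendsto_neg_atTop_atBot) hpast
  by_cases hIntφ : Integrable φ
  · -- convergent case
    have hψ : Integrable (fun t => (H t) ^ 2 / a t) := by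
      refine hIntφ.mono' hψc.aestronglyMeasurable (Eventually.of_forall fun t => ?_)
      rw [Real.norm_of_nonneg (div_nonneg (sq_nonneg _) (hpos t).le)]
      exact le_add_of_nonneg_right (one_div_pos.mpr (pow_pos (hpos t) 3)).le
    -- limits must vanish
    have hLp0 : Lp = 0 := by
      by_contra hL0
      have hL2 : (0:ℝ) < Lp ^ 2 / 2 := by positivity
      have hgsq : Tendsto (fun t => g t ^ 2) atTop (nhds (Lp ^ 2)) := hLp.pow 2
      have hev : ∀ᶠ t in atTop, Lp ^ 2 / 2 < g t ^ 2 :=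
        hgsq.eventually (eventually_gt_nhds (by linarith))
      obtain ⟨T₀, hT₀⟩ := eventually_atTop.mp hev
      set T₁ := max T₀ 0 with hT₁
      have haint : IntegrableOn a (Set.Ioi T₁) := by
        have hψT : IntegrableOn (fun t => (2 / Lp ^ 2) * ((H t) ^ 2 / a t)) (Set.Ioi T₁) :=
          (hψ.integrableOn).const_mul _
        refine Integrable.mono' hψT haC.aestronglyMeasurable.restrict ?_
        rw [ae_restrict_iff' measurableSet_Ioi]
        refine Eventually.of_forall fun t ht => ?_
        have h1 : Lp ^ 2 / 2 < g t ^ 2 := hT₀ t ((le_max_left _ _).trans ht.le)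
        have hat := hpos t
        rw [Real.norm_of_nonneg hat.le, hψg t]
        have h2 : Lp ^ 2 / 2 * a t ≤ g t ^ 2 * a t :=
          mul_le_mul_of_nonneg_right h1.le hat.le
        calc a t = (2 / Lp ^ 2) * (Lp ^ 2 / 2 * a t) := by field_simp
          _ ≤ (2 / Lp ^ 2) * (g t ^ 2 * a t) := by
              apply mul_le_mul_of_nonneg_left h2; positivity
      have h1 : IntegrableOn a (Set.Ioc 0 T₁) :=
        (haC.integrableOn_Icc).mono_set Set.Ioc_subset_Icc_self
      have := h1.union haint
      rw [Set.Ioc_union_Ioi_eq_Ioi (le_max_right T₀ 0)] at this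
      exact hnotIoi this
    have hLm0 : Lm = 0 := by
      by_contra hL0
      have hL2 : (0:ℝ) < Lm ^ 2 / 2 := by positivity
      have hgsq : Tendsto (fun t => g t ^ 2) atBot (nhds (Lm ^ 2)) := hLm.pow 2
      have hev : ∀ᶠ t in atBot, Lm ^ 2 / 2 < g t ^ 2 :=
        hgsq.eventually (eventually_gt_nhds (by linarith))
      obtain ⟨T₀, hT₀⟩ := eventually_atBot.mp hev
      set T₁ := min T₀ 0 with hT₁
      have haint : IntegrableOn a (Set.Iio T₁) := by
        have hψT : IntegrableOn (fun t => (2 / Lm ^ 2) * ((H t) ^ 2 / a t)) (Set.Iio T₁) :=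
          (hψ.integrableOn).const_mul _
        refine Integrable.mono' hψT haC.aestronglyMeasurable.restrict ?_
        rw [ae_restrict_iff' measurableSet_Iio]
        refine Eventually.of_forall fun t ht => ?_
        have h1 : Lm ^ 2 / 2 < g t ^ 2 := hT₀ t (ht.le.trans (min_le_left _ _))
        have hat := hpos t
        rw [Real.norm_of_nonneg hat.le, hψg t]
        have h2 : Lm ^ 2 / 2 * a t ≤ g t ^ 2 * a t :=
          mul_le_mul_of_nonneg_right h1.le hat.le
        calc a t = (2 / Lm ^ 2) * (Lm ^ 2 / 2 * a t) := by field_simp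
          _ ≤ (2 / Lm ^ 2) * (g t ^ 2 * a t) := by
              apply mul_le_mul_of_nonneg_left h2; positivity
      have h1 : IntegrableOn a (Set.Icc T₁ 0) := haC.integrableOn_Icc
      have := haint.union h1
      rw [Set.Iio_union_Icc_eq_Iic (min_le_right T₀ 0)] at this
      exact hnotIic this
    subst hLp0; subst hLm0
    -- positivity of the total integral
    have hintpos : 0 < ∫ t, φ t := by
      have h01 : 0 < ∫ t in (0:ℝ)..1, φ t :=
        intervalIntegral.intervalIntegral_pos_of_pos_on (hφc.intervalIntegrable 0 1)
          (fun x _ => hφpos x) one_pos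
      have hle : (∫ t in (0:ℝ)..1, φ t) ≤ ∫ t, φ t := by
        rw [intervalIntegral.integral_of_le zero_le_one]
        exact setIntegral_le_integral hIntφ (Eventually.of_forall fun t => (hφpos t).le)
      linarith
    -- the limit
    have h1 : Tendsto (fun p : ℝ × ℝ => g p.2) (atBot ×ˢ atTop) (nhds 0) :=
      hLp.comp tendsto_snd
    have h2 : Tendsto (fun p : ℝ × ℝ => g p.1) (atBot ×ˢ atTop) (nhds 0) :=
      hLm.comp tendsto_fst
    have h3 : Tendsto (fun p : ℝ × ℝ => ∫ t in p.1..p.2, φ t) (atBot ×ˢ atTop)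
        (nhds (∫ t, φ t)) :=
      intervalIntegral_tendsto_integral hIntφ tendsto_fst tendsto_snd
    have hcomb : Tendsto
        (fun p : ℝ × ℝ => -2 * (g p.2 - g p.1) - 2 * ∫ t in p.1..p.2, φ t)
        (atBot ×ˢ atTop) (nhds (-2 * ((0:ℝ) - 0) - 2 * ∫ t, φ t)) :=
      ((h1.sub h2).const_mul _).sub (h3.const_mul _)
    have heq : (-2 : ℝ) * ((0:ℝ) - 0) - 2 * ∫ t, φ t = -2 * ∫ t, φ t := by ring
    rw [heq] at hcomb
    have hreal : Tendsto
        (fun p : ℝ × ℝ => ∫ t in p.1..p.2, (-2 * (deriv H t + 1 / (a t) ^ 2)) / a t)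
        (atBot ×ˢ atTop) (nhds (-2 * ∫ t, φ t)) :=
      hcomb.congr (fun p => (key p.1 p.2).symm)
    refine ⟨((-2 * ∫ t, φ t : ℝ) : EReal), EReal.tendsto_coe.mpr hreal, ?_, Or.inr ?_⟩
    · exact_mod_cast (by linarith : (-2 * ∫ t, φ t : ℝ) < 0)
    · exact ⟨hIntφ, hLp, hLm, rfl, by linarith⟩
  · -- divergent case
    have hsplit : ¬ IntegrableOn φ (Set.Iic 0) ∨ ¬ IntegrableOn φ (Set.Ioi 0) := by
      by_contra hcon
      push_neg at hcon
      have := hcon.1.union hcon.2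
      rw [Set.Iic_union_Ioi] at this
      exact hIntφ (integrableOn_univ.mp this)
    set F : ℝ → ℝ := fun y => ∫ t in (0:ℝ)..y, φ t with hFdef
    set Gm : ℝ → ℝ := fun x => ∫ t in x..(0:ℝ), φ t with hGmdef
    have hJ : ∀ x y : ℝ, (∫ t in x..y, φ t) = Gm x + F y := fun x y =>
      (intervalIntegral.integral_add_adjacent_intervals (hφc.intervalIntegrable x 0)
        (hφc.intervalIntegrable 0 y)).symm
    have hFmono : Monotone F := by
      intro y y' hy
      have := intervalIntegral.integral_add_adjacent_intervals (μ := volume)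
        (hφc.intervalIntegrable 0 y) (hφc.intervalIntegrable y y')
      have hnn : 0 ≤ ∫ t in y..y', φ t :=
        intervalIntegral.integral_nonneg hy (fun t _ => (hφpos t).le)
      show F y ≤ F y'
      rw [hFdef]
      simp only []
      rw [← this]
      linarith
    have hGanti : Antitone Gm := by
      intro x x' hx
      have := intervalIntegral.integral_add_adjacent_intervals (μ := volume)
        (hφc.intervalIntegrable x x') (hφc.intervalIntegrable x' 0)
      have hnn : 0 ≤ ∫ t in x..x', φ t :=
        intervalIntegral.integral_nonneg hx (fun t _ => (hφpos t).le)
      show Gm x' ≤ Gm x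
      rw [hGmdef]
      simp only []
      rw [← this]
      linarith
    have hF0 : F 0 = 0 := intervalIntegral.integral_same
    have hGm0 : Gm 0 = 0 := intervalIntegral.integral_same
    have hnorm : ∀ x : ℝ, ‖φ x‖ = φ x := fun x => Real.norm_of_nonneg (hφpos x).le
    -- divergence of the expanding integrals
    have hJdiv : Tendsto (fun p : ℝ × ℝ => ∫ t in p.1..p.2, φ t) (atBot ×ˢ atTop) atTop := by
      rcases hsplit with hIic | hIoi
      · -- Gm diverges at -∞
        have hK : Monotone (fun s : ℝ => Gm (-s)) := fun s s' hs =>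
          hGanti (neg_le_neg hs)
        have hGdiv : Tendsto Gm atBot atTop := by
          rcases tendsto_of_monotone hK with hdiv | ⟨c, hc⟩
          · have := hdiv.comp (tendsto_neg_atBot_atTop : Tendsto (Neg.neg : ℝ → ℝ) atBot atTop)
            exact this.congr fun x => by simp [Function.comp]
          · exfalso
            apply hIic
            refine integrableOn_Iic_of_intervalIntegral_norm_bounded c 0
              (fun i : ℝ => ((hφc.integrableOn_Icc).mono_set Set.Ioc_subset_Icc_self))
              tendsto_neg_atTop_atBot ?_
            refine Eventually.of_forall fun i => ?_
            have : (∫ x in (-i)..0, ‖φ x‖) = Gm (-i) := by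
              simp only [hGmdef]
              exact intervalIntegral.integral_congr fun t _ => hnorm t
            rw [this]
            exact hK.ge_of_tendsto hc i
        have hF0' : ∀ᶠ p : ℝ × ℝ in atBot ×ˢ atTop, Gm p.1 ≤ ∫ t in p.1..p.2, φ t := by
          filter_upwards [tendsto_snd.eventually (eventually_ge_atTop (0:ℝ))] with p hp
          rw [hJ p.1 p.2]
          have : (0:ℝ) ≤ F p.2 := hF0 ▸ hFmono hp
          linarith
        exact tendsto_atTop_mono' _ hF0' (hGdiv.comp tendsto_fst)
      · -- F diverges at +∞
        have hFdiv : Tendsto F atTop atTop := by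
          rcases tendsto_of_monotone hFmono with hdiv | ⟨c, hc⟩
          · exact hdiv
          · exfalso
            apply hIoi
            refine integrableOn_Ioi_of_intervalIntegral_norm_bounded c 0
              (fun i : ℝ => ((hφc.integrableOn_Icc).mono_set Set.Ioc_subset_Icc_self))
              tendsto_id ?_
            refine Eventually.of_forall fun i => ?_
            have heqn : (∫ x in (0:ℝ)..(id i), ‖φ x‖) = F i := by
              simp only [hFdef, id_eq]
              exact intervalIntegral.integral_congr fun t _ => hnorm t
            rw [heqn]
            exact hFmono.ge_of_tendsto hc i
        have hF0' : ∀ᶠ p : ℝ × ℝ in atBot ×ˢ atTop, F p.2 ≤ ∫ t in p.1..p.2, φ t := by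
          filter_upwards [tendsto_fst.eventually (eventually_le_atBot (0:ℝ))] with p hp
          rw [hJ p.1 p.2]
          have : (0:ℝ) ≤ Gm p.1 := hGm0 ▸ hGanti hp
          linarith
        exact tendsto_atTop_mono' _ hF0' (hFdiv.comp tendsto_snd)
    -- the integral tends to -∞
    have hb : Tendsto (fun p : ℝ × ℝ => -2 * (g p.2 - g p.1)) (atBot ×ˢ atTop)
        (nhds (-2 * (Lp - Lm))) :=
      ((hLp.comp tendsto_snd).sub (hLm.comp tendsto_fst)).const_mul _
    have hc2 : Tendsto (fun p : ℝ × ℝ => -(2 * ∫ t in p.1..p.2, φ t)) (atBot ×ˢ atTop)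
        atBot :=
      tendsto_neg_atTop_atBot.comp (hJdiv.const_mul_atTop two_pos)
    have hreal : Tendsto
        (fun p : ℝ × ℝ => ∫ t in p.1..p.2, (-2 * (deriv H t + 1 / (a t) ^ 2)) / a t)
        (atBot ×ˢ atTop) atBot := by
      have := hb.add_atBot hc2
      refine this.congr fun p => ?_
      rw [key p.1 p.2]
      ring
    refine ⟨⊥, ?_, ?_, Or.inl rfl⟩
    · rw [EReal.tendsto_nhds_bot_iff_real]
      intro x
      filter_upwards [hreal.eventually (eventually_lt_atBot x)] with p hp
      exact_mod_cast hp
    · rw [show (0 : EReal) = ((0:ℝ) : EReal) from rfl]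
      exact EReal.bot_lt_coe 0
end
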